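/- arXiv:2305.02816 — 6 statements merged into one kernel-verified Lean document; each statement's English description precedes it below -/
import Mathlib

section
/- Let c₁, c₂ ∈ {0,1}^d be bitstrings, let p ∈ [0,1/2), and let b_p be a random vector whose d bits are independent Bernoulli(p). Then the probability that the Hamming distance from c₁ ⊕ b_p to c₂ is at most the Hamming distance from c₁ ⊕ b_p to c₁ is at most exp(-((1-2p)²/(4p+2))·H(c₁,c₂)), where H denotes Hamming distance. -/
open Finset

private lemma le_of_sq_le_sq' {a b : ℝ} (ha : 0 ≤ a) (hb : 0 ≤ b) (h : a ^ 2 ≤ b ^ 2) :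
    a ≤ b := by nlinarith

/-- For bitstrings `c₁ c₂ ∈ {0,1}^d` and `b_p ~ Bern(p)^d` with `p ∈ [0,1/2)`,
`Pr[H(c₁ ⊕ b_p, c₂) ≤ H(c₁ ⊕ b_p, c₁)] ≤ exp(-((1-2p)²/(4p+2))·H(c₁,c₂))`. -/
theorem flip_closer_prob_bound (d : ℕ) (c₁ c₂ : Fin d → Bool) (p : ℝ)
    (hp0 : 0 ≤ p) (hp : p < 1 / 2) :
    (∑ b ∈ Finset.univ.filter (fun b : Fin d → Bool =>
        hammingDist (fun i => xor (c₁ i) (b i)) c₂ ≤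
          hammingDist (fun i => xor (c₁ i) (b i)) c₁),
      ∏ i, (if b i then p else 1 - p)) ≤
    Real.exp (-((1 - 2 * p) ^ 2 / (4 * p + 2)) * (hammingDist c₁ c₂ : ℝ)) := by
  classical
  have hp1 : p ≤ 1 - p := by linarith
  set S : Finset (Fin d) := univ.filter (fun i => c₁ i ≠ c₂ i) with hS
  set k := S.card with hk
  have hdist : hammingDist c₁ c₂ = k := rfl
  set w : Bool → ℝ := fun x => if x then p else 1 - p with hw
  have hw0 : ∀ x, 0 ≤ w x := by intro x; cases x <;> simp [hw] <;> linarith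
  set r : ℝ := Real.sqrt (p * (1 - p)) with hr
  have hr0 : 0 ≤ r := Real.sqrt_nonneg _
  have hr2 : r ^ 2 = p * (1 - p) := Real.sq_sqrt (by nlinarith)
  set t : (Fin d → Bool) → ℕ := fun b => (S.filter (fun i => b i = true)).card with ht
  -- key combinatorial identity
  have key : ∀ b : Fin d → Bool,
      hammingDist (fun i => xor (c₁ i) (b i)) c₂ + 2 * t b
        = hammingDist (fun i => xor (c₁ i) (b i)) c₁ + k := by
    intro b
    have h1 : hammingDist (fun i => xor (c₁ i) (b i)) c₂
        = ∑ i, if xor (c₁ i) (b i) ≠ c₂ i then 1 else 0 := Finset.card_filter _ _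
    have h2 : hammingDist (fun i => xor (c₁ i) (b i)) c₁
        = ∑ i, if xor (c₁ i) (b i) ≠ c₁ i then 1 else 0 := Finset.card_filter _ _
    have h3 : t b = ∑ i, if c₁ i ≠ c₂ i ∧ b i = true then 1 else 0 := by
      rw [show t b = (S.filter (fun i => b i = true)).card from rfl, hS,
        Finset.filter_filter, Finset.card_filter]
    have h4 : k = ∑ i, if c₁ i ≠ c₂ i then 1 else 0 := by
      rw [hk, hS, Finset.card_filter]
    rw [h1, h2, h3, h4, Finset.mul_sum, ← Finset.sum_add_distrib, ← Finset.sum_add_distrib]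
    refine Finset.sum_congr rfl fun i _ => ?_
    cases hc1 : c₁ i <;> cases hc2 : c₂ i <;> cases hb : b i <;> simp [hc1, hc2, hb]
  have htk : ∀ b, t b ≤ k := fun b => Finset.card_filter_le _ _
  -- per-term bound on the S-part of the product
  have prodS : ∀ b : Fin d → Bool, k ≤ 2 * t b → (∏ i ∈ S, w (b i)) ≤ r ^ k := by
    intro b hb
    have hsplit : (∏ i ∈ S, w (b i))
        = (∏ i ∈ S.filter (fun i => b i = true), w (b i)) *
          ∏ i ∈ S.filter (fun i => ¬ b i = true), w (b i) :=
      (Finset.prod_filter_mul_prod_filter_not S _ _).symm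
    have e1 : (∏ i ∈ S.filter (fun i => b i = true), w (b i)) = p ^ t b := by
      have hall : ∀ i ∈ S.filter (fun i => b i = true), w (b i) = p := by
        intro i hi
        have hbi := (Finset.mem_filter.mp hi).2
        simp [hw, hbi]
      rw [Finset.prod_congr rfl hall, Finset.prod_const]
    have hcard2 : (S.filter (fun i => ¬ b i = true)).card = k - t b := by
      have h := Finset.card_filter_add_card_filter_not
        (s := S) (p := fun i => b i = true)
      have ha : t b = (S.filter (fun i => b i = true)).card := rfl
      have hb' : k = S.card := hk
      omega
    have e2 : (∏ i ∈ S.filter (fun i => ¬ b i = true), w (b i)) = (1 - p) ^ (k - t b) := by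
      have hall : ∀ i ∈ S.filter (fun i => ¬ b i = true), w (b i) = 1 - p := by
        intro i hi
        have hbi := (Finset.mem_filter.mp hi).2
        simp only [Bool.not_eq_true] at hbi
        simp [hw, hbi]
      rw [Finset.prod_congr rfl hall, Finset.prod_const, hcard2]
    rw [hsplit, e1, e2]
    have hL0 : 0 ≤ p ^ t b * (1 - p) ^ (k - t b) :=
      mul_nonneg (pow_nonneg hp0 _) (pow_nonneg (by linarith) _)
    refine le_of_sq_le_sq' hL0 (pow_nonneg hr0 _) ?_
    have ht' := htk b
    have h2t : 2 * t b = k + (2 * t b - k) := by omega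
    calc (p ^ t b * (1 - p) ^ (k - t b)) ^ 2
        = p ^ (2 * t b) * (1 - p) ^ (2 * (k - t b)) := by
          rw [mul_pow, ← pow_mul, ← pow_mul]; ring_nf
      _ = p ^ k * p ^ (2 * t b - k) * (1 - p) ^ (2 * (k - t b)) := by
          rw [← pow_add, ← h2t]
      _ ≤ p ^ k * (1 - p) ^ (2 * t b - k) * (1 - p) ^ (2 * (k - t b)) := by
          have hle := pow_le_pow_left₀ hp0 hp1 (2 * t b - k)
          exact mul_le_mul_of_nonneg_right
            (mul_le_mul_of_nonneg_left hle (pow_nonneg hp0 k))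
            (pow_nonneg (by linarith) _)
      _ = p ^ k * (1 - p) ^ k := by
          rw [mul_assoc, ← pow_add]
          congr 2
          omega
      _ = (r ^ k) ^ 2 := by
          rw [← pow_mul, mul_comm k 2, pow_mul, hr2, mul_pow]
  have hprodnn : ∀ (b : Fin d → Bool) (s : Finset (Fin d)), 0 ≤ ∏ i ∈ s, w (b i) :=
    fun b s => Finset.prod_nonneg fun i _ => hw0 _
  -- bound the sum
  have sumbound : (∑ b ∈ Finset.univ.filter (fun b : Fin d → Bool =>
        hammingDist (fun i => xor (c₁ i) (b i)) c₂ ≤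
          hammingDist (fun i => xor (c₁ i) (b i)) c₁),
      ∏ i, (if b i then p else 1 - p)) ≤ r ^ k * 2 ^ k := by
    have step1 : ∀ b ∈ Finset.univ.filter (fun b : Fin d → Bool =>
        hammingDist (fun i => xor (c₁ i) (b i)) c₂ ≤
          hammingDist (fun i => xor (c₁ i) (b i)) c₁),
        (∏ i, (if b i then p else 1 - p)) ≤
          r ^ k * ∏ i ∈ univ.filter (fun i => ¬ c₁ i ≠ c₂ i), w (b i) := by
      intro b hb
      have hcond := (Finset.mem_filter.mp hb).2
      have hkt : k ≤ 2 * t b := by have := key b; omega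
      have hsplit : (∏ i, (if b i then p else 1 - p))
          = (∏ i ∈ S, w (b i)) * ∏ i ∈ univ.filter (fun i => ¬ c₁ i ≠ c₂ i), w (b i) := by
        rw [hS]
        exact (Finset.prod_filter_mul_prod_filter_not univ _ _).symm
      rw [hsplit]
      exact mul_le_mul_of_nonneg_right (prodS b hkt) (hprodnn b _)
    calc (∑ b ∈ Finset.univ.filter (fun b : Fin d → Bool =>
        hammingDist (fun i => xor (c₁ i) (b i)) c₂ ≤
          hammingDist (fun i => xor (c₁ i) (b i)) c₁),
      ∏ i, (if b i then p else 1 - p))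
        ≤ ∑ b ∈ Finset.univ.filter (fun b : Fin d → Bool =>
            hammingDist (fun i => xor (c₁ i) (b i)) c₂ ≤
              hammingDist (fun i => xor (c₁ i) (b i)) c₁),
            r ^ k * ∏ i ∈ univ.filter (fun i => ¬ c₁ i ≠ c₂ i), w (b i) :=
          Finset.sum_le_sum step1
      _ ≤ ∑ b : Fin d → Bool, r ^ k * ∏ i ∈ univ.filter (fun i => ¬ c₁ i ≠ c₂ i), w (b i) :=
          Finset.sum_le_sum_of_subset_of_nonneg (Finset.filter_subset _ _)
            (fun b _ _ => mul_nonneg (pow_nonneg hr0 _) (hprodnn b _))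
      _ = r ^ k * ∑ b : Fin d → Bool, ∏ i ∈ univ.filter (fun i => ¬ c₁ i ≠ c₂ i), w (b i) := by
          rw [Finset.mul_sum]
      _ = r ^ k * 2 ^ k := by
          congr 1
          have hfil : ∀ b : Fin d → Bool, (∏ i ∈ univ.filter (fun i => ¬ c₁ i ≠ c₂ i), w (b i))
              = ∏ i : Fin d, (if ¬ c₁ i ≠ c₂ i then w (b i) else 1) :=
            fun b => Finset.prod_filter _ _
          rw [Finset.sum_congr rfl fun b _ => hfil b]
          have hps := Finset.prod_univ_sum (fun _ : Fin d => (univ : Finset Bool))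
            (fun i x => if ¬ c₁ i ≠ c₂ i then w x else 1)
          rw [Fintype.piFinset_univ] at hps
          rw [← hps]
          have heach : ∀ i : Fin d, (∑ x : Bool, if ¬ c₁ i ≠ c₂ i then w x else 1)
              = if c₁ i ≠ c₂ i then 2 else 1 := by
            intro i
            by_cases h : c₁ i ≠ c₂ i <;>
              simp [h, hw, Fintype.sum_bool] <;> ring
          rw [Finset.prod_congr rfl fun i _ => heach i, Finset.prod_ite, Finset.prod_const,
            Finset.prod_const, one_pow, mul_one, ← hS, ← hk]
  refine le_trans sumbound ?_
  have hkey : 2 * r ≤ Real.exp (-((1 - 2 * p) ^ 2 / (4 * p + 2))) := by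
    set c := (1 - 2 * p) ^ 2 / (4 * p + 2) with hc
    have h2c : 1 - 2 * c ≤ Real.exp (-(2 * c)) := by
      have := Real.add_one_le_exp (-(2 * c))
      linarith
    have hq : (2 * r) ^ 2 ≤ 1 - 2 * c := by
      have hrr : (2 * r) ^ 2 = 4 * (p * (1 - p)) := by rw [mul_pow, hr2]; ring
      have h1 : (1 - 2 * p) ^ 2 / (4 * p + 2) ≤ (1 - 2 * p) ^ 2 / 2 :=
        div_le_div_of_nonneg_left (sq_nonneg _) two_pos (by linarith)
      rw [hrr, hc]
      nlinarith [h1]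
    have hexp2 : Real.exp (-(2 * c)) = (Real.exp (-c)) ^ 2 := by
      rw [← Real.exp_nat_mul]
      congr 1
      push_cast
      ring
    have hsq : (2 * r) ^ 2 ≤ (Real.exp (-c)) ^ 2 := by
      rw [← hexp2]; linarith
    exact le_of_sq_le_sq' (by positivity) (Real.exp_pos _).le hsq
  calc r ^ k * 2 ^ k = (2 * r) ^ k := by rw [mul_pow]; ring
    _ ≤ (Real.exp (-((1 - 2 * p) ^ 2 / (4 * p + 2)))) ^ k :=
        pow_le_pow_left₀ (by positivity) hkey k
    _ = Real.exp (-((1 - 2 * p) ^ 2 / (4 * p + 2)) * (hammingDist c₁ c₂ : ℝ)) := by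
        rw [← Real.exp_nat_mul, hdist]
        ring_nf
end

section
/- Let C_enc : [m] → {0,1}^d be an encoding map and define the complement code L_enc by L_enc(v) = C_enc(v) · 0^D if v is even and L_enc(v) = complement(C_enc(v)) · 1^D if v is odd, where D is a fixed natural number and · denotes concatenation. Define K_enc(v) = C_enc(v) · L_enc(v) · C_enc(v) · L_enc(v). Then for every v ∈ [m-1], the Hamming distance between K_enc(v) and K_enc(v+1) equals 2(d + D), independent of v. -/
private lemma hd_append {m n : ℕ} (a c : Fin m → Bool) (b e : Fin n → Bool) :
    hammingDist (Fin.append a b) (Fin.append c e) = hammingDist a c + hammingDist b e := by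
  classical
  simp only [hammingDist, Finset.card_filter]
  rw [Fin.sum_univ_add]
  simp [Fin.append_left, Fin.append_right]

private lemma hd_compl {d : ℕ} (a c : Fin d → Bool) :
    hammingDist a c + hammingDist a (fun i => !(c i)) = d := by
  classical
  simp only [hammingDist, Finset.card_filter, ← Finset.sum_add_distrib]
  have h : ∀ i : Fin d, ((if a i = c i then (0:ℕ) else 1) + (if a i = c i then 1 else 0)) = 1 := by
    intro i; by_cases h : a i = c i <;> simp [h]
  simp [h]

private lemma hd_const {D : ℕ} :
    hammingDist (fun _ : Fin D => false) (fun _ => true) = D := by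
  classical
  simp [hammingDist, Finset.filter_true_of_mem]

/-- Constant consecutive distance: with the complement code `L` (padding length `D`) and
`K(v) = C(v)·L(v)·C(v)·L(v)`, consecutive codewords of `K` are at Hamming distance
exactly `2(d+D)`, independent of `v`. -/
theorem constant_consecutive_distance (m d D : ℕ)
    (Cenc : ℕ → Fin d → Bool)
    (Lenc : ℕ → Fin (d + D) → Bool)
    (hL : ∀ v, Lenc v = if Even v then Fin.append (Cenc v) (fun _ => false)
        else Fin.append (fun i => !(Cenc v i)) (fun _ => true))
    (Kenc : ℕ → Fin (d + (d + D) + (d + (d + D))) → Bool)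
    (hK : ∀ v, Kenc v =
      Fin.append (Fin.append (Cenc v) (Lenc v)) (Fin.append (Cenc v) (Lenc v)))
    (v : ℕ) (hv : v + 1 < m) :
    hammingDist (Kenc v) (Kenc (v + 1)) = 2 * (d + D) := by
  have key : hammingDist (Fin.append (Cenc v) (Lenc v))
      (Fin.append (Cenc (v+1)) (Lenc (v+1))) = d + D := by
    rw [hd_append, hL v, hL (v+1)]
    by_cases he : Even v
    · have ho : ¬ Even (v+1) := by simp [Nat.even_add_one, he]
      rw [if_pos he, if_neg ho, hd_append, hd_const]
      have := hd_compl (Cenc v) (Cenc (v+1))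
      omega
    · have ho : Even (v+1) := Nat.even_add_one.mpr he
      rw [if_neg he, if_pos ho, hd_append, hammingDist_comm (fun _ : Fin D => (true:Bool)),
        hd_const, hammingDist_comm (fun i => !(Cenc v i)),
        hammingDist_comm (Cenc v) (Cenc (v+1))]
      have := hd_compl (Cenc (v+1)) (Cenc v)
      omega
  rw [hK v, hK (v+1), hd_append, key]
  ring
end

section
/- Let C = (C_enc, C_dec) be a code from [m] to {0,1}^d with minimum distance D, and let 0 < p < 1/2. Let c_p be a vector of D independent Bernoulli(p) bits. Then the failure probability P_p(C) = max_v Pr[C_dec(C_enc(v) ⊕ b_p) ≠ v], where b_p ~ Bern(p)^d, satisfies P_p(C) ≥ Pr[||c_p||₁ > D/2] + (1/2)·Pr[||c_p||₁ = D/2]. -/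
open Finset

/-- total mass of the Bernoulli product measure is 1 -/
lemma FPLB_sum_one (n : ℕ) (p : ℝ) :
    ∑ c : Fin n → Bool, ∏ i, (if c i then p else 1 - p) = 1 := by
  have h := Fintype.prod_sum (f := fun (_ : Fin n) (x : Bool) => if x then p else 1 - p)
  rw [← h]
  simp

/-- weights are nonnegative -/
lemma FPLB_w_nonneg {p : ℝ} (hp0 : 0 < p) (hp : p < 1/2) (x : Bool) :
    0 ≤ (if x then p else 1 - p) := by
  cases x <;> simp <;> linarith

lemma FPLB_pi_nonneg {n : ℕ} {p : ℝ} (hp0 : 0 < p) (hp : p < 1/2) (b : Fin n → Bool) :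
    0 ≤ ∏ i, (if b i then p else 1 - p) :=
  Finset.prod_nonneg fun i _ => FPLB_w_nonneg hp0 hp (b i)

open Finset

lemma FPLB_marginal (d D : ℕ) (p : ℝ) (S : Finset (Fin d)) (hS : S.card = D)
    (Q : ℕ → Prop) [DecidablePred Q] :
    ∑ b : Fin d → Bool,
      (if Q ((S.filter fun i => b i = true).card) then ∏ i, (if b i then p else 1 - p) else 0)
    = ∑ c : Fin D → Bool,
      (if Q ((univ.filter fun i => c i = true).card) then ∏ i, (if c i then p else 1 - p) else 0) := by
  have hSc : Sᶜ.card = d - D := by rw [card_compl, hS]; simp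
  let eS : {i // i ∈ S} ≃ Fin D := S.equivFin.trans (finCongr hS)
  let eSc : {i // i ∉ S} ≃ Fin (d - D) :=
    ((Equiv.subtypeEquivRight (fun i => (Finset.mem_compl (s := S)).symm)).trans
      Sᶜ.equivFin).trans (finCongr hSc)
  let E : Fin d ≃ Fin D ⊕ Fin (d - D) :=
    (Equiv.sumCompl (fun i => i ∈ S)).symm.trans (Equiv.sumCongr eS eSc)
  have hinl : ∀ j, E.symm (Sum.inl j) ∈ S := by
    intro j
    simp only [E, Equiv.symm_trans_apply, Equiv.sumCongr_symm, Equiv.sumCongr_apply,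
      Sum.map_inl, Equiv.sumCompl_apply_inl]
    exact (eS.symm j).2
  have hinr : ∀ j, E.symm (Sum.inr j) ∉ S := by
    intro j
    simp only [E, Equiv.symm_trans_apply, Equiv.sumCongr_symm, Equiv.sumCongr_apply,
      Sum.map_inr, Equiv.sumCompl_apply_inr]
    exact (eSc.symm j).2
  let Ψ : ((Fin D → Bool) × (Fin (d - D) → Bool)) ≃ (Fin d → Bool) :=
    (Equiv.sumArrowEquivProdArrow _ _ Bool).symm.trans (Equiv.arrowCongr E.symm (Equiv.refl Bool))
  have hΨ : ∀ (q : (Fin D → Bool) × (Fin (d - D) → Bool)) (i : Fin d),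
      Ψ q i = Sum.elim q.1 q.2 (E i) := fun q i => rfl
  have hcard : ∀ (c : Fin D → Bool) (c' : Fin (d - D) → Bool),
      (S.filter fun i => Ψ (c, c') i = true).card = (univ.filter fun j => c j = true).card := by
    intro c c'
    rw [Finset.card_filter, Finset.card_filter]
    have h1 : ∑ i ∈ S, (if Ψ (c, c') i = true then 1 else 0)
        = ∑ i : Fin d, if i ∈ S then (if Sum.elim c c' (E i) = true then 1 else 0) else 0 := by
      rw [Finset.sum_ite_mem, Finset.univ_inter]
      exact Finset.sum_congr rfl fun i _ => by rw [hΨ]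
    rw [h1, ← Equiv.sum_comp E.symm
      (fun i => if i ∈ S then (if Sum.elim c c' (E i) = true then 1 else 0) else 0),
      Fintype.sum_sum_type]
    simp [hinl, hinr, Equiv.apply_symm_apply]
  have hprod : ∀ (c : Fin D → Bool) (c' : Fin (d - D) → Bool),
      (∏ i, (if Ψ (c, c') i then p else 1 - p))
        = (∏ j, (if c j then p else 1 - p)) * (∏ j, (if c' j then p else 1 - p)) := by
    intro c c'
    have h1 : (∏ i, (if Ψ (c, c') i then p else 1 - p))
        = ∏ i, (if Sum.elim c c' (E i) then p else 1 - p) :=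
      Finset.prod_congr rfl fun i _ => by rw [hΨ]
    rw [h1, Equiv.prod_comp E (fun s => if Sum.elim c c' s then p else 1 - p),
      Fintype.prod_sum_type]
    rfl
  rw [← Equiv.sum_comp Ψ, Fintype.sum_prod_type]
  refine Finset.sum_congr rfl fun c _ => ?_
  have : ∀ c' : Fin (d - D) → Bool,
      (if Q ((S.filter fun i => Ψ (c, c') i = true).card)
        then ∏ i, (if Ψ (c, c') i then p else 1 - p) else 0)
      = (if Q ((univ.filter fun j => c j = true).card)
        then ∏ j, (if c j then p else 1 - p) else 0) * (∏ j, (if c' j then p else 1 - p)) := by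
    intro c'
    rw [hcard, hprod]
    split <;> simp
  rw [Finset.sum_congr rfl fun c' _ => this c', ← Finset.mul_sum, FPLB_sum_one, mul_one]

open Finset

lemma FPLB_kflip (d : ℕ) (S : Finset (Fin d)) (e b : Fin d → Bool)
    (he : ∀ i ∈ S, e i = true) :
    (S.filter fun i => xor (b i) (e i) = true).card
      = S.card - (S.filter fun i => b i = true).card := by
  have h1 : S.filter (fun i => xor (b i) (e i) = true) = S.filter (fun i => ¬ (b i = true)) := by
    apply Finset.filter_congr
    intro i hi
    rw [he i hi]
    simp
  have h2 := Finset.card_filter_add_card_filter_not (s := S) (p := fun i => b i = true)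
  rw [h1]
  omega

lemma FPLB_prodS (d : ℕ) (p : ℝ) (S : Finset (Fin d)) (b : Fin d → Bool) :
    ∏ i ∈ S, (if b i then p else 1 - p)
      = p ^ (S.filter fun i => b i = true).card
        * (1 - p) ^ (S.card - (S.filter fun i => b i = true).card) := by
  rw [← Finset.prod_filter_mul_prod_filter_not S (fun i => b i = true)]
  have h2 := Finset.card_filter_add_card_filter_not (s := S) (p := fun i => b i = true)
  congr 1
  · rw [Finset.prod_congr rfl (fun i hi => if_pos (Finset.mem_filter.mp hi).2),
      Finset.prod_const]
  · rw [Finset.prod_congr rfl (fun i hi => if_neg (Finset.mem_filter.mp hi).2),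
      Finset.prod_const]
    congr 1
    omega

lemma FPLB_pow_le {p : ℝ} (hp0 : 0 < p) (hp : p < 1/2) {k j : ℕ} (hkj : j ≤ k) :
    p ^ k * (1 - p) ^ j ≤ p ^ j * (1 - p) ^ k := by
  have h1 : p ≤ 1 - p := by linarith
  have h1p : (0:ℝ) ≤ 1 - p := by linarith
  have e1 : p ^ k = p ^ j * p ^ (k - j) := by rw [← pow_add]; congr 1; omega
  have e2 : (1 - p) ^ k = (1 - p) ^ j * (1 - p) ^ (k - j) := by rw [← pow_add]; congr 1; omega
  have h2 : p ^ (k - j) ≤ (1 - p) ^ (k - j) := pow_le_pow_left₀ hp0.le h1 _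
  have key : p ^ (k - j) * (p ^ j * (1 - p) ^ j) ≤ (1 - p) ^ (k - j) * (p ^ j * (1 - p) ^ j) :=
    mul_le_mul_of_nonneg_right h2 (mul_nonneg (pow_nonneg hp0.le j) (pow_nonneg h1p j))
  calc p ^ k * (1 - p) ^ j = p ^ (k - j) * (p ^ j * (1 - p) ^ j) := by rw [e1]; ring
    _ ≤ (1 - p) ^ (k - j) * (p ^ j * (1 - p) ^ j) := key
    _ = p ^ j * (1 - p) ^ k := by rw [e2]; ring

lemma FPLB_pi_le (d : ℕ) {p : ℝ} (hp0 : 0 < p) (hp : p < 1/2) (S : Finset (Fin d))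
    (e b : Fin d → Bool) (he : ∀ i, e i = true ↔ i ∈ S)
    (hk : S.card ≤ 2 * (S.filter fun i => b i = true).card) :
    ∏ i, (if b i then p else 1 - p) ≤ ∏ i, (if xor (b i) (e i) then p else 1 - p) := by
  have h1p : (0:ℝ) ≤ 1 - p := by linarith
  set k := (S.filter fun i => b i = true).card with hkdef
  have hkS : k ≤ S.card := Finset.card_filter_le _ _
  rw [← Finset.prod_mul_prod_compl S (fun i => if b i then p else 1 - p),
      ← Finset.prod_mul_prod_compl S (fun i => if xor (b i) (e i) then p else 1 - p)]
  have hcompl : ∏ i ∈ Sᶜ, (if b i then p else 1 - p)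
      = ∏ i ∈ Sᶜ, (if xor (b i) (e i) then p else 1 - p) := by
    apply Finset.prod_congr rfl
    intro i hi
    have : e i = false := by
      rw [Finset.mem_compl] at hi
      cases h : e i
      · rfl
      · exact absurd ((he i).mp h) hi
    rw [this, Bool.xor_false]
  rw [← hcompl]
  apply mul_le_mul_of_nonneg_right _ (Finset.prod_nonneg fun i _ => by
    split <;> [exact hp0.le; exact h1p])
  rw [FPLB_prodS, FPLB_prodS, FPLB_kflip d S e b (fun i hi => (he i).mpr hi), ← hkdef]
  have : S.card - (S.card - k) = k := by omega
  rw [this]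
  exact FPLB_pow_le hp0 hp (by omega)
/-- Lower bound on the failure probability of a code with minimum distance `D` under
`Bern(p)^d` noise: `P_p(C) ≥ Pr[‖c_p‖₁ > D/2] + ½·Pr[‖c_p‖₁ = D/2]`
where `c_p ~ Bern(p)^D`. -/
theorem failure_prob_lower_bound (m d D : ℕ) (p : ℝ) (hp0 : 0 < p) (hp : p < 1 / 2)
    (Cenc : ℕ → Fin d → Bool) (Cdec : (Fin d → Bool) → ℕ)
    (hcode : ∀ v < m, Cdec (Cenc v) = v)
    (hD1 : ∀ u < m, ∀ v < m, u ≠ v → D ≤ hammingDist (Cenc u) (Cenc v))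
    (hD2 : ∃ u, u < m ∧ ∃ v, v < m ∧ u ≠ v ∧ hammingDist (Cenc u) (Cenc v) = D) :
    ∃ v, v < m ∧
      (∑ c ∈ Finset.univ.filter (fun c : Fin D → Bool =>
          D < 2 * (Finset.univ.filter fun i => c i = true).card),
        ∏ i, (if c i then p else 1 - p))
      + (1 / 2) * (∑ c ∈ Finset.univ.filter (fun c : Fin D → Bool =>
          2 * (Finset.univ.filter fun i => c i = true).card = D),
        ∏ i, (if c i then p else 1 - p))
      ≤ ∑ b ∈ Finset.univ.filter (fun b : Fin d → Bool =>
          Cdec (fun i => xor (Cenc v i) (b i)) ≠ v),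
        ∏ i, (if b i then p else 1 - p) := by
  classical
  obtain ⟨u, hum, v, hvm, huv, hdist⟩ := hD2
  set π : (Fin d → Bool) → ℝ := fun b => ∏ i, (if b i then p else 1 - p) with hπ
  have hπ0 : ∀ b, 0 ≤ π b := fun b => FPLB_pi_nonneg hp0 hp b
  set e : Fin d → Bool := fun i => xor (Cenc u i) (Cenc v i) with he_def
  set S : Finset (Fin d) := Finset.univ.filter (fun i => e i = true) with hS_def
  have he : ∀ i, e i = true ↔ i ∈ S := by
    intro i; simp [hS_def]
  have hS : S.card = D := by
    rw [← hdist]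
    unfold hammingDist
    congr 1
    apply Finset.filter_congr
    intro i _
    simp only [he_def]
    cases hu : Cenc u i <;> cases hv : Cenc v i <;> simp
  set T : (Fin d → Bool) → (Fin d → Bool) := fun b i => xor (b i) (e i) with hT_def
  have hTT : ∀ b, T (T b) = b := by
    intro b; funext i; simp [hT_def]
  have hTbij : Function.Bijective T := Function.Involutive.bijective hTT
  set k : (Fin d → Bool) → ℕ := fun b => (S.filter fun i => b i = true).card with hk_def
  have hkD : ∀ b, k b ≤ D := fun b => hS ▸ Finset.card_filter_le _ _
  have hkT : ∀ b, k (T b) = D - k b := by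
    intro b
    simpa [hT_def, hk_def, hS] using FPLB_kflip d S e b (fun i hi => (he i).mpr hi)
  have hπT : ∀ b, D ≤ 2 * k b → π b ≤ π (T b) := by
    intro b hb
    exact FPLB_pi_le d hp0 hp S e b he (by rw [hS]; exact hb)
  have hkey : ∀ b : Fin d → Bool,
      Cdec (fun i => xor (Cenc u i) (b i)) ≠ u ∨ Cdec (fun i => xor (Cenc v i) (T b i)) ≠ v := by
    intro b
    by_contra hcon
    push_neg at hcon
    obtain ⟨h1, h2⟩ := hcon
    have hw : (fun i => xor (Cenc v i) (T b i)) = fun i => xor (Cenc u i) (b i) := by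
      funext i
      simp only [hT_def, he_def]
      cases Cenc u i <;> cases Cenc v i <;> cases b i <;> rfl
    rw [hw] at h2
    exact huv (h1.symm.trans h2)
  set Fu : (Fin d → Bool) → ℝ :=
    fun b => if Cdec (fun i => xor (Cenc u i) (b i)) ≠ u then π b else 0 with hFu
  set Fv : (Fin d → Bool) → ℝ :=
    fun b => if Cdec (fun i => xor (Cenc v i) (b i)) ≠ v then π b else 0 with hFv
  have hFu0 : ∀ b, 0 ≤ Fu b := by
    intro b; rw [hFu]; dsimp only; split
    exacts [hπ0 b, le_refl 0]
  have hFv0 : ∀ b, 0 ≤ Fv b := by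
    intro b; rw [hFv]; dsimp only; split
    exacts [hπ0 b, le_refl 0]
  have hptA : ∀ b, D ≤ 2 * k b → π b ≤ Fu b + Fv (T b) := by
    intro b hb
    rcases hkey b with h | h
    · have h1 : Fu b = π b := by rw [hFu]; dsimp only; rw [if_pos h]
      have := hFv0 (T b); linarith
    · have h1 : Fv (T b) = π (T b) := by rw [hFv]; dsimp only; rw [if_pos h]
      have h2 := hπT b hb
      have := hFu0 b; linarith
  have hptB : ∀ b, D ≤ 2 * k b → π b ≤ Fu (T b) + Fv b := by
    intro b hb
    rcases hkey (T b) with h | h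
    · have h1 : Fu (T b) = π (T b) := by rw [hFu]; dsimp only; rw [if_pos h]
      have h2 := hπT b hb
      have := hFv0 b; linarith
    · rw [hTT b] at h
      have h1 : Fv b = π b := by rw [hFv]; dsimp only; rw [if_pos h]
      have := hFu0 (T b); linarith
  have hsplit : ∀ G : (Fin d → Bool) → ℝ, ∑ b : Fin d → Bool, G b
      = (∑ b : Fin d → Bool, if D < 2 * k b then G b else 0)
      + (∑ b : Fin d → Bool, if 2 * k b < D then G b else 0)
      + (∑ b : Fin d → Bool, if 2 * k b = D then G b else 0) := by
    intro G
    rw [← Finset.sum_add_distrib, ← Finset.sum_add_distrib]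
    apply Finset.sum_congr rfl
    intro b _
    rcases lt_trichotomy (2 * k b) D with h | h | h
    · rw [if_neg (by omega), if_pos h, if_neg (by omega)]; ring
    · rw [if_neg (by omega), if_neg (by omega), if_pos h]; ring
    · rw [if_pos h, if_neg (by omega), if_neg (by omega)]; ring
  have hre1 : ∀ G : (Fin d → Bool) → ℝ,
      (∑ b : Fin d → Bool, if 2 * k b < D then G b else 0)
      = ∑ b : Fin d → Bool, if D < 2 * k b then G (T b) else 0 := by
    intro G
    refine (Fintype.sum_bijective T hTbij _ _ ?_).symm
    intro b
    have h1 := hkT b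
    have h2 := hkD b
    by_cases h : D < 2 * k b
    · rw [if_pos h, if_pos (show 2 * k (T b) < D by omega)]
    · rw [if_neg h, if_neg (show ¬ 2 * k (T b) < D by omega)]
  have hre2 : ∀ G : (Fin d → Bool) → ℝ,
      (∑ b : Fin d → Bool, if 2 * k b = D then G b else 0)
      = ∑ b : Fin d → Bool, if 2 * k b = D then G (T b) else 0 := by
    intro G
    refine (Fintype.sum_bijective T hTbij _ _ ?_).symm
    intro b
    have h1 := hkT b
    have h2 := hkD b
    by_cases h : 2 * k b = D
    · rw [if_pos h, if_pos (show 2 * k (T b) = D by omega)]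
    · rw [if_neg h, if_neg (show ¬ 2 * k (T b) = D by omega)]
  set A : ℝ := ∑ b : Fin d → Bool, if D < 2 * k b then π b else 0 with hA
  set B : ℝ := ∑ b : Fin d → Bool, if 2 * k b = D then π b else 0 with hB
  have g1 : A ≤ (∑ b : Fin d → Bool, if D < 2 * k b then Fu b else 0)
      + (∑ b : Fin d → Bool, if D < 2 * k b then Fv (T b) else 0) := by
    rw [hA, ← Finset.sum_add_distrib]
    apply Finset.sum_le_sum
    intro b _
    by_cases h : D < 2 * k b
    · rw [if_pos h, if_pos h, if_pos h]; exact hptA b h.le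
    · rw [if_neg h, if_neg h, if_neg h]; norm_num
  have g2 : A ≤ (∑ b : Fin d → Bool, if D < 2 * k b then Fu (T b) else 0)
      + (∑ b : Fin d → Bool, if D < 2 * k b then Fv b else 0) := by
    rw [hA, ← Finset.sum_add_distrib]
    apply Finset.sum_le_sum
    intro b _
    by_cases h : D < 2 * k b
    · rw [if_pos h, if_pos h, if_pos h]; exact hptB b h.le
    · rw [if_neg h, if_neg h, if_neg h]; norm_num
  have g3 : B ≤ (∑ b : Fin d → Bool, if 2 * k b = D then Fu b else 0)
      + (∑ b : Fin d → Bool, if 2 * k b = D then Fv (T b) else 0) := by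
    rw [hB, ← Finset.sum_add_distrib]
    apply Finset.sum_le_sum
    intro b _
    by_cases h : 2 * k b = D
    · rw [if_pos h, if_pos h, if_pos h]; exact hptA b (le_of_eq h.symm)
    · rw [if_neg h, if_neg h, if_neg h]; norm_num
  have hPu : ∑ b : Fin d → Bool, Fu b
      = (∑ b : Fin d → Bool, if D < 2 * k b then Fu b else 0)
      + (∑ b : Fin d → Bool, if D < 2 * k b then Fu (T b) else 0)
      + (∑ b : Fin d → Bool, if 2 * k b = D then Fu b else 0) := by
    rw [hsplit Fu, hre1 Fu]
  have hPv : ∑ b : Fin d → Bool, Fv b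
      = (∑ b : Fin d → Bool, if D < 2 * k b then Fv b else 0)
      + (∑ b : Fin d → Bool, if D < 2 * k b then Fv (T b) else 0)
      + (∑ b : Fin d → Bool, if 2 * k b = D then Fv (T b) else 0) := by
    rw [hsplit Fv, hre1 Fv, hre2 Fv]
  have hmain : 2 * A + B ≤ (∑ b : Fin d → Bool, Fu b) + (∑ b : Fin d → Bool, Fv b) := by
    rw [hPu, hPv]; linarith
  have hAeq : (∑ c ∈ Finset.univ.filter (fun c : Fin D → Bool =>
      D < 2 * (Finset.univ.filter fun i => c i = true).card),
      ∏ i, (if c i then p else 1 - p)) = A := by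
    rw [Finset.sum_filter, hA]
    exact (FPLB_marginal d D p S hS (fun n => D < 2 * n)).symm
  have hBeq : (∑ c ∈ Finset.univ.filter (fun c : Fin D → Bool =>
      2 * (Finset.univ.filter fun i => c i = true).card = D),
      ∏ i, (if c i then p else 1 - p)) = B := by
    rw [Finset.sum_filter, hB]
    exact (FPLB_marginal d D p S hS (fun n => 2 * n = D)).symm
  have hfin : A + 1 / 2 * B ≤ (∑ b : Fin d → Bool, Fu b)
      ∨ A + 1 / 2 * B ≤ (∑ b : Fin d → Bool, Fv b) := by
    by_contra hcon
    push_neg at hcon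
    obtain ⟨c1, c2⟩ := hcon
    linarith
  rcases hfin with hcase | hcase
  · refine ⟨u, hum, ?_⟩
    rw [hAeq, hBeq, Finset.sum_filter]
    exact hcase
  · refine ⟨v, hvm, ?_⟩
    rw [hAeq, hBeq, Finset.sum_filter]
    exact hcase
end

section
/- Let K_enc(v) = C_enc(v) L_enc(v) C_enc(v) L_enc(v) be the four-fold concatenation construction from an injective code C_enc with minimum distance D, with L_enc the complement code. Let G_enc be the Gray code derived from K_enc by flipping the g = 2(d + D) differing bits one at a time. Then for all v, v' in the domain with |v - v'| < D, the Hamming distance between G_enc(v) and G_enc(v') equals |v - v'|. -/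
open Finset

lemma aux_card_ne_append {α : Type*} [DecidableEq α] {a c : ℕ} (f f' : Fin a → α) (g g' : Fin c → α) :
    (univ.filter fun j : Fin (a+c) => Fin.append f g j ≠ Fin.append f' g' j).card
    = (univ.filter fun j => f j ≠ f' j).card + (univ.filter fun j => g j ≠ g' j).card := by
  simp only [Finset.card_filter]
  rw [Fin.sum_univ_add]
  simp [Fin.append_left, Fin.append_right]

lemma aux_card_filter_lt (n c : ℕ) (hc : c ≤ n) :
    (univ.filter fun i : Fin n => (i:ℕ) < c).card = c := by
  rcases Nat.lt_or_ge c n with h | h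
  · have : (univ.filter fun i : Fin n => (i:ℕ) < c) = Finset.Iio ⟨c, h⟩ := by
      ext i; simp [Fin.lt_def]
    rw [this, Fin.card_Iio]
  · have hcn : c = n := le_antisymm hc h
    subst hcn
    have : (univ.filter fun i : Fin c => (i:ℕ) < c) = univ := by
      ext i; simp [i.isLt]
    rw [this, Finset.card_univ, Fintype.card_fin]

lemma aux_card_filter_le (n r : ℕ) (hr : r ≤ n) :
    (univ.filter fun i : Fin n => r ≤ (i:ℕ)).card = n - r := by
  have h := Finset.card_filter_add_card_filter_not (s := (univ : Finset (Fin n)))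
    (p := fun i : Fin n => (i:ℕ) < r)
  have h2 : (univ.filter fun i : Fin n => ¬ (i:ℕ) < r) = (univ.filter fun i : Fin n => r ≤ (i:ℕ)) := by
    ext i; simp [not_lt]
  rw [h2, aux_card_filter_lt n r hr] at h
  simp at h; omega

lemma aux_card_filter_interval (n r s : ℕ) (hs : s ≤ n) (hrs : r ≤ s) :
    (univ.filter fun i : Fin n => r ≤ (i:ℕ) ∧ (i:ℕ) < s).card = s - r := by
  have h := Finset.card_filter_add_card_filter_not (s := univ.filter fun i : Fin n => (i:ℕ) < s)
    (p := fun i : Fin n => (i:ℕ) < r)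
  rw [Finset.filter_filter, Finset.filter_filter] at h
  have e1 : (univ.filter fun i : Fin n => (i:ℕ) < s ∧ (i:ℕ) < r) = univ.filter fun i : Fin n => (i:ℕ) < r := by
    ext i; simp; omega
  have e2 : (univ.filter fun i : Fin n => (i:ℕ) < s ∧ ¬ (i:ℕ) < r) = univ.filter fun i : Fin n => r ≤ (i:ℕ) ∧ (i:ℕ) < s := by
    ext i; simp; omega
  rw [e1, e2, aux_card_filter_lt n s hs, aux_card_filter_lt n r (le_trans hrs hs)] at h
  omega

lemma aux_mono_init {n N H c : ℕ} (b : Fin n → Fin N) (hb : StrictMono b)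
    (hcard : (univ.filter fun i => (b i : ℕ) < H).card = c) (i : Fin n) :
    (b i : ℕ) < H ↔ (i : ℕ) < c := by
  constructor
  · intro h
    by_contra hc
    push_neg at hc
    have hsub : Finset.Iic i ⊆ (univ.filter fun i' : Fin n => (b i' : ℕ) < H) := by
      intro i' hi'
      simp only [Finset.mem_Iic] at hi'
      simp only [mem_filter, mem_univ, true_and]
      have hle : (b i' : ℕ) ≤ (b i : ℕ) := Fin.le_def.mp (hb.monotone hi')
      omega
    have := Finset.card_le_card hsub
    rw [hcard, Fin.card_Iic] at this
    omega
  · intro h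
    by_contra hc
    push_neg at hc
    have hsub : (univ.filter fun i' : Fin n => (b i' : ℕ) < H) ⊆ Finset.Iio i := by
      intro i' hi'
      simp only [mem_filter] at hi'
      simp only [Finset.mem_Iio]
      have hlt : b i' < b i := Fin.lt_def.mpr (by omega)
      exact hb.lt_iff_lt.mp hlt
    have := Finset.card_le_card hsub
    rw [hcard, Fin.card_Iio] at this
    omega

lemma aux_card_filter_image {n N : ℕ} (b : Fin n → Fin N) (hb : Function.Injective b)
    (P : Fin N → Prop) [DecidablePred P] :
    (univ.filter fun i : Fin n => P (b i)).card = ((univ.image b).filter P).card := by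
  rw [Finset.filter_image, Finset.card_image_of_injective _ hb]

lemma aux_half_card (d D : ℕ) (Cenc : ℕ → Fin d → Bool) (Lenc : ℕ → Fin (d + D) → Bool)
    (hL : ∀ v, Lenc v = if Even v then Fin.append (Cenc v) (fun _ => false)
        else Fin.append (fun i => !(Cenc v i)) (fun _ => true)) (q : ℕ) :
    (univ.filter fun j : Fin (d + (d + D)) =>
      Fin.append (Cenc q) (Lenc q) j ≠ Fin.append (Cenc (q+1)) (Lenc (q+1)) j).card = d + D := by
  rw [aux_card_ne_append]
  have hCsplit := Finset.card_filter_add_card_filter_not (s := (univ : Finset (Fin d)))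
    (p := fun j => Cenc q j ≠ Cenc (q+1) j)
  rw [Finset.card_univ, Fintype.card_fin] at hCsplit
  have hLcard : (univ.filter fun j : Fin (d + D) => Lenc q j ≠ Lenc (q+1) j).card
      = (univ.filter fun j : Fin d => ¬ (Cenc q j ≠ Cenc (q+1) j)).card + D := by
    rcases Nat.even_or_odd q with he | ho
    · have ho1 : ¬ Even (q+1) := by simp [Nat.even_add_one, he]
      rw [hL q, hL (q+1), if_pos he, if_neg ho1, aux_card_ne_append]
      have e1 : (univ.filter fun j : Fin d => Cenc q j ≠ !(Cenc (q+1) j))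
          = univ.filter fun j : Fin d => ¬ (Cenc q j ≠ Cenc (q+1) j) := by
        ext j
        simp only [Finset.mem_filter, Finset.mem_univ, true_and]
        cases h1 : Cenc q j <;> cases h2 : Cenc (q+1) j <;> simp
      have e2 : (univ.filter fun j : Fin D => (fun _ : Fin D => false) j ≠ (fun _ : Fin D => true) j)
          = univ := by
        ext j; simp
      rw [e1, e2, Finset.card_univ, Fintype.card_fin]
    · have ho0 : ¬ Even q := Nat.not_even_iff_odd.mpr ho
      have he1 : Even (q+1) := by simpa [Nat.even_add_one] using ho0
      rw [hL q, hL (q+1), if_neg ho0, if_pos he1, aux_card_ne_append]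
      have e1 : (univ.filter fun j : Fin d => (!Cenc q j) ≠ Cenc (q+1) j)
          = univ.filter fun j : Fin d => ¬ (Cenc q j ≠ Cenc (q+1) j) := by
        ext j
        simp only [Finset.mem_filter, Finset.mem_univ, true_and]
        cases h1 : Cenc q j <;> cases h2 : Cenc (q+1) j <;> simp
      have e2 : (univ.filter fun j : Fin D => (fun _ : Fin D => true) j ≠ (fun _ : Fin D => false) j)
          = univ := by
        ext j; simp
      rw [e1, e2, Finset.card_univ, Fintype.card_fin]
  rw [hLcard]
  omega

/-- For the error-correcting Gray code `Genc` built from an injective code `Cenc` of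
minimum distance `D` via the four-fold concatenation construction, values at distance
less than `D` have encodings at Hamming distance exactly `|v - v'|`. -/
theorem gray_code_small_dist (m d D : ℕ)
    (Cenc : ℕ → Fin d → Bool)
    (hinj : ∀ u < m, ∀ v < m, Cenc u = Cenc v → u = v)
    (hdist : ∀ u < m, ∀ v < m, u ≠ v → D ≤ hammingDist (Cenc u) (Cenc v))
    (Lenc : ℕ → Fin (d + D) → Bool)
    (hL : ∀ v, Lenc v = if Even v then Fin.append (Cenc v) (fun _ => false)
        else Fin.append (fun i => !(Cenc v i)) (fun _ => true))
    (Kenc : ℕ → Fin (d + (d + D) + (d + (d + D))) → Bool)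
    (hK : ∀ v, Kenc v =
      Fin.append (Fin.append (Cenc v) (Lenc v)) (Fin.append (Cenc v) (Lenc v)))
    (b : ℕ → Fin (2 * (d + D)) → Fin (d + (d + D) + (d + (d + D))))
    (hmono : ∀ q, q + 1 < m → StrictMono (b q))
    (hdiffb : ∀ q, q + 1 < m → ∀ i, Kenc q (b q i) ≠ Kenc (q + 1) (b q i))
    (Genc : ℕ → Fin (d + (d + D) + (d + (d + D))) → Bool)
    (hG : ∀ q r, r < 2 * (d + D) → q * (2 * (d + D)) + r ≤ (m - 1) * (2 * (d + D)) →
      ∀ j, Genc (q * (2 * (d + D)) + r) j =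
        if ∃ i : Fin (2 * (d + D)), (i : ℕ) < r ∧ b q i = j then Kenc (q + 1) j else Kenc q j)
    (v v' : ℕ) (hv : v ≤ (m - 1) * (2 * (d + D))) (hv' : v' ≤ (m - 1) * (2 * (d + D)))
    (hclose : Nat.dist v v' < D) :
    hammingDist (Genc v) (Genc v') = Nat.dist v v' := by
  classical
  have fact1 := aux_half_card d D Cenc Lenc hL
  have facttot : ∀ q : ℕ,
      (univ.filter fun j : Fin (d + (d + D) + (d + (d + D))) => Kenc q j ≠ Kenc (q+1) j).card
        = 2 * (d + D) := by
    intro q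
    simp only [hK]
    rw [aux_card_ne_append, fact1 q]
    omega
  have fact2 : ∀ q, q + 1 < m →
      Finset.image (b q) univ
        = univ.filter fun j => Kenc q j ≠ Kenc (q+1) j := by
    intro q hq
    apply Finset.eq_of_subset_of_card_le
    · intro j hj
      simp only [Finset.mem_image] at hj
      obtain ⟨i, -, rfl⟩ := hj
      simp only [Finset.mem_filter, Finset.mem_univ, true_and]
      exact hdiffb q hq i
    · rw [facttot q, Finset.card_image_of_injective _ (hmono q hq).injective, Finset.card_univ,
        Fintype.card_fin]
  have fact3 : ∀ q, q + 1 < m → ∀ j, (Kenc q j ≠ Kenc (q+1) j ↔ ∃ i, b q i = j) := by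
    intro q hq j
    constructor
    · intro h
      have hmem : j ∈ Finset.image (b q) univ := by
        rw [fact2 q hq]
        simp only [Finset.mem_filter, Finset.mem_univ, true_and]
        exact h
      simpa using hmem
    · rintro ⟨i, rfl⟩
      exact hdiffb q hq i
  have fact4half : ∀ q : ℕ,
      (univ.filter fun j : Fin (d + (d + D) + (d + (d + D))) =>
        (Kenc q j ≠ Kenc (q+1) j) ∧ ((j : ℕ) < d + (d + D))).card = d + D := by
    intro q
    simp only [hK]
    rw [Finset.card_filter, Fin.sum_univ_add]
    simp only [Fin.append_left, Fin.append_right, Fin.coe_castAdd, Fin.coe_natAdd]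
    have s1 : (∑ i : Fin (d + (d + D)),
        if (Fin.append (Cenc q) (Lenc q) i ≠ Fin.append (Cenc (q+1)) (Lenc (q+1)) i)
            ∧ ((i : ℕ) < d + (d + D)) then 1 else 0) = d + D := by
      rw [← Finset.card_filter]
      have e : (univ.filter fun i : Fin (d + (d + D)) =>
          (Fin.append (Cenc q) (Lenc q) i ≠ Fin.append (Cenc (q+1)) (Lenc (q+1)) i)
            ∧ ((i : ℕ) < d + (d + D)))
          = univ.filter fun i : Fin (d + (d + D)) =>
            Fin.append (Cenc q) (Lenc q) i ≠ Fin.append (Cenc (q+1)) (Lenc (q+1)) i := by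
        ext i
        simp [i.isLt]
      rw [e]
      exact fact1 q
    have s2 : (∑ i : Fin (d + (d + D)),
        if (Fin.append (Cenc q) (Lenc q) i ≠ Fin.append (Cenc (q+1)) (Lenc (q+1)) i)
            ∧ (d + (d + D) + (i : ℕ) < d + (d + D)) then 1 else 0) = 0 := by
      apply Finset.sum_eq_zero
      intro i _
      rw [if_neg]
      rintro ⟨-, h⟩
      omega
    rw [s1, s2]
    omega
  have fact4 : ∀ q, q + 1 < m → ∀ i : Fin (2 * (d + D)),
      ((b q i : ℕ) < d + (d + D) ↔ (i : ℕ) < d + D) := by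
    intro q hq
    apply aux_mono_init (b q) (hmono q hq)
    rw [aux_card_filter_image (b q) (hmono q hq).injective (fun j => (j : ℕ) < d + (d + D)),
      fact2 q hq, Finset.filter_filter]
    exact fact4half q
  suffices key : ∀ w w' : ℕ, w ≤ w' → w' ≤ (m - 1) * (2 * (d + D)) → w' - w < D →
      hammingDist (Genc w) (Genc w') = w' - w by
    rcases le_total v v' with h | h
    · rw [Nat.dist_eq_sub_of_le h] at hclose ⊢
      exact key v v' h hv' hclose
    · rw [Nat.dist_eq_sub_of_le_right h] at hclose ⊢
      rw [hammingDist_comm]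
      exact key v' v h hv hclose
  intro w w' hle hw' hδ
  rcases Nat.eq_or_lt_of_le hle with heq | hlt
  · subst heq
    simp [hammingDist_self]
  -- now w < w'
  have hD2 : 2 ≤ D := by omega
  have hgpos : 0 < 2 * (d + D) := by omega
  obtain ⟨R, hRlt, hweq⟩ : ∃ R, R < 2 * (d + D) ∧ w = (w / (2 * (d + D))) * (2 * (d + D)) + R :=
    ⟨w % (2 * (d + D)), Nat.mod_lt _ hgpos, by rw [mul_comm]; exact (Nat.div_add_mod w _).symm⟩
  generalize hQdef : w / (2 * (d + D)) = Q at hweq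
  have hqm : Q + 1 < m := by
    have h0 : Q * (2 * (d + D)) ≤ w := by rw [hweq]; exact Nat.le_add_right _ _
    have h1 : Q * (2 * (d + D)) < (m - 1) * (2 * (d + D)) :=
      lt_of_le_of_lt h0 (lt_of_lt_of_le hlt hw')
    have h2 : Q < m - 1 := lt_of_mul_lt_mul_right h1 (Nat.zero_le _)
    omega
  have hGv : ∀ j, Genc w j =
      if ∃ i : Fin (2 * (d + D)), (i : ℕ) < R ∧ b Q i = j then Kenc (Q+1) j else Kenc Q j := by
    have h := hG Q R hRlt (by rw [← hweq]; exact le_trans hle hw')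
    rw [← hweq] at h
    exact h
  show (univ.filter fun j => Genc w j ≠ Genc w' j).card = w' - w
  rcases Nat.lt_or_ge (R + (w' - w)) (2 * (d + D)) with hcase | hcase
  · -- same block
    have hw'eq : w' = Q * (2 * (d + D)) + (R + (w' - w)) := by
      generalize Q * (2 * (d + D)) = P at hweq ⊢
      omega
    have hGv' : ∀ j, Genc w' j =
        if ∃ i : Fin (2 * (d + D)), (i : ℕ) < R + (w' - w) ∧ b Q i = j then Kenc (Q+1) j
        else Kenc Q j := by
      have h := hG Q (R + (w' - w)) hcase (by rw [← hw'eq]; exact hw')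
      rw [← hw'eq] at h
      exact h
    have hseteq : (univ.filter fun j => Genc w j ≠ Genc w' j)
        = Finset.image (b Q)
          (univ.filter fun i : Fin (2 * (d + D)) => R ≤ (i : ℕ) ∧ (i : ℕ) < R + (w' - w)) := by
      ext j
      simp only [Finset.mem_filter, Finset.mem_univ, true_and, Finset.mem_image]
      rw [hGv j, hGv' j]
      constructor
      · intro hne
        by_cases h1 : ∃ i : Fin (2 * (d + D)), (i : ℕ) < R ∧ b Q i = j
        · have h2 : ∃ i : Fin (2 * (d + D)), (i : ℕ) < R + (w' - w) ∧ b Q i = j := by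
            obtain ⟨i, hi1, hi2⟩ := h1
            exact ⟨i, by omega, hi2⟩
          rw [if_pos h1, if_pos h2] at hne
          exact absurd rfl hne
        · by_cases h2 : ∃ i : Fin (2 * (d + D)), (i : ℕ) < R + (w' - w) ∧ b Q i = j
          · obtain ⟨i, hi1, hi2⟩ := h2
            refine ⟨i, ⟨?_, hi1⟩, hi2⟩
            by_contra hri
            push_neg at hri
            exact h1 ⟨i, by omega, hi2⟩
          · rw [if_neg h1, if_neg h2] at hne
            exact absurd rfl hne
      · rintro ⟨i, ⟨hir, his⟩, rfl⟩
        have h1 : ¬ ∃ i' : Fin (2 * (d + D)), (i' : ℕ) < R ∧ b Q i' = b Q i := by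
          rintro ⟨i', hi', he⟩
          have hii : i' = i := (hmono Q hqm).injective he
          rw [hii] at hi'
          omega
        have h2 : ∃ i' : Fin (2 * (d + D)), (i' : ℕ) < R + (w' - w) ∧ b Q i' = b Q i :=
          ⟨i, his, rfl⟩
        rw [if_neg h1, if_pos h2]
        exact hdiffb Q hqm i
    rw [hseteq, Finset.card_image_of_injective _ (hmono Q hqm).injective,
      aux_card_filter_interval _ _ _ (le_of_lt hcase) (by omega)]
    omega
  · -- cross block
    have hw'eq : w' = (Q + 1) * (2 * (d + D)) + (R + (w' - w) - 2 * (d + D)) := by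
      have h2 : (Q + 1) * (2 * (d + D)) = Q * (2 * (d + D)) + 2 * (d + D) := by ring
      rw [h2]
      generalize Q * (2 * (d + D)) = P at hweq ⊢
      omega
    have hq2 : 0 < R + (w' - w) - 2 * (d + D) → Q + 1 + 1 < m := by
      intro hpos
      by_contra hq
      push_neg at hq
      have h1 : (m - 1) * (2 * (d + D)) ≤ (Q + 1) * (2 * (d + D)) :=
        Nat.mul_le_mul_right _ (by omega)
      generalize hP1 : (Q + 1) * (2 * (d + D)) = P1 at h1 hw'eq
      generalize hP2 : (m - 1) * (2 * (d + D)) = P2 at h1 hw'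
      omega
    have hr'lt : R + (w' - w) - 2 * (d + D) < 2 * (d + D) := by omega
    have hGv' : ∀ j, Genc w' j =
        if ∃ i : Fin (2 * (d + D)), (i : ℕ) < R + (w' - w) - 2 * (d + D) ∧ b (Q + 1) i = j
        then Kenc (Q + 1 + 1) j else Kenc (Q + 1) j := by
      have h := hG (Q + 1) (R + (w' - w) - 2 * (d + D)) hr'lt (by rw [← hw'eq]; exact hw')
      rw [← hw'eq] at h
      exact h
    have hdisj : ∀ (i i' : Fin (2 * (d + D))), R ≤ (i : ℕ) →
        (i' : ℕ) < R + (w' - w) - 2 * (d + D) → b Q i ≠ b (Q + 1) i' := by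
      intro i i' hiR hi' hbe
      have hq2m : Q + 1 + 1 < m := hq2 (by omega)
      have h1 : ¬ ((b Q i : ℕ) < d + (d + D)) := by
        rw [fact4 Q hqm i]
        omega
      have h2 : (b (Q + 1) i' : ℕ) < d + (d + D) := by
        rw [fact4 (Q + 1) hq2m i']
        omega
      rw [hbe] at h1
      exact h1 h2
    have hseteq : (univ.filter fun j => Genc w j ≠ Genc w' j)
        = Finset.image (b Q) (univ.filter fun i : Fin (2 * (d + D)) => R ≤ (i : ℕ))
          ∪ Finset.image (b (Q + 1))
            (univ.filter fun i : Fin (2 * (d + D)) => (i : ℕ) < R + (w' - w) - 2 * (d + D)) := by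
      ext j
      simp only [Finset.mem_filter, Finset.mem_univ, true_and, Finset.mem_union,
        Finset.mem_image]
      rw [hGv j, hGv' j]
      by_cases h1 : ∃ i : Fin (2 * (d + D)), (i : ℕ) < R ∧ b Q i = j
      · by_cases h2 : ∃ i : Fin (2 * (d + D)), (i : ℕ) < R + (w' - w) - 2 * (d + D) ∧ b (Q + 1) i = j
        · rw [if_pos h1, if_pos h2]
          refine iff_of_true ?_ (Or.inr ?_)
          · obtain ⟨i', hi', he'⟩ := h2
            have hq2m : Q + 1 + 1 < m := hq2 (by omega)
            rw [← he']
            exact hdiffb (Q + 1) hq2m i'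
          · obtain ⟨i', hi', he'⟩ := h2
            exact ⟨i', by simpa using hi', he'⟩
        · rw [if_pos h1, if_neg h2]
          refine iff_of_false (by simp) ?_
          rintro (⟨i, hiR, he⟩ | ⟨i, hi, he⟩)
          · obtain ⟨i0, hi0, he0⟩ := h1
            have hii : i = i0 := (hmono Q hqm).injective (he.trans he0.symm)
            rw [hii] at hiR
            omega
          · exact h2 ⟨i, hi, he⟩
      · by_cases h2 : ∃ i : Fin (2 * (d + D)), (i : ℕ) < R + (w' - w) - 2 * (d + D) ∧ b (Q + 1) i = j
        · rw [if_neg h1, if_pos h2]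
          obtain ⟨i', hi', he'⟩ := h2
          have hq2m : Q + 1 + 1 < m := hq2 (by omega)
          refine iff_of_true ?_ (Or.inr ⟨i', hi', he'⟩)
          have e1 : Kenc Q j = Kenc (Q + 1) j := by
            by_contra hne
            obtain ⟨i, he⟩ := (fact3 Q hqm j).mp hne
            by_cases hiR : (i : ℕ) < R
            · exact h1 ⟨i, hiR, he⟩
            · exact hdisj i i' (by omega) hi' (he.trans he'.symm)
          rw [e1, ← he']
          exact hdiffb (Q + 1) hq2m i'
        · rw [if_neg h1, if_neg h2]
          rw [fact3 Q hqm j]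
          constructor
          · rintro ⟨i, he⟩
            left
            refine ⟨i, ?_, he⟩
            by_contra hiR
            push_neg at hiR
            exact h1 ⟨i, hiR, he⟩
          · rintro (⟨i, hiR, he⟩ | ⟨i, hi, he⟩)
            · exact ⟨i, he⟩
            · exact absurd ⟨i, hi, he⟩ h2
    have hABdisj : Disjoint
        (Finset.image (b Q) (univ.filter fun i : Fin (2 * (d + D)) => R ≤ (i : ℕ)))
        (Finset.image (b (Q + 1))
          (univ.filter fun i : Fin (2 * (d + D)) => (i : ℕ) < R + (w' - w) - 2 * (d + D))) := by
      rw [Finset.disjoint_left]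
      rintro j hjA hjB
      simp only [Finset.mem_image, Finset.mem_filter, Finset.mem_univ, true_and] at hjA hjB
      obtain ⟨i, hi, he⟩ := hjA
      obtain ⟨i', hi', he'⟩ := hjB
      exact hdisj i i' hi hi' (he.trans he'.symm)
    rw [hseteq, Finset.card_union_of_disjoint hABdisj,
      Finset.card_image_of_injective _ (hmono Q hqm).injective,
      Finset.card_image_of_injOn (fun i hi i' hi' he => by
        simp only [Finset.coe_filter, Set.mem_setOf_eq] at hi hi'
        exact (hmono (Q + 1) (hq2 (by omega))).injective he),
      aux_card_filter_le _ _ (le_of_lt hRlt),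
      aux_card_filter_lt _ _ (by omega)]
    omega
end

section
/- Let G_enc be the error-correcting Gray code built (via Construction of the paper) from an injective code C_enc with minimum distance D(C). Then for all v, v' in the domain with |v - v'| ≥ D(C), the Hamming distance between G_enc(v) and G_enc(v') is at least D(C). -/
open Finset

namespace GrayAux

lemma fin_card_Ico (g a c : ℕ) (hc : c ≤ g) :
    ((Finset.univ : Finset (Fin g)).filter fun i : Fin g => a ≤ (i : ℕ) ∧ (i : ℕ) < c).card = c - a := by
  have h : (((Finset.univ : Finset (Fin g)).filter fun i : Fin g => a ≤ (i : ℕ) ∧ (i : ℕ) < c).image Fin.val)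
      = Finset.Ico a c := by
    ext x
    simp only [Finset.mem_image, Finset.mem_filter, Finset.mem_univ, true_and, Finset.mem_Ico]
    constructor
    · rintro ⟨i, hi, rfl⟩; exact hi
    · rintro ⟨h1, h2⟩; exact ⟨⟨x, lt_of_lt_of_le h2 hc⟩, ⟨h1, h2⟩, rfl⟩
  rw [← Nat.card_Ico a c, ← h, Finset.card_image_of_injective _ Fin.val_injective]

lemma fin_lower {g : ℕ} (S : Finset (Fin g))
    (hS : ∀ i j : Fin g, i ≤ j → j ∈ S → i ∈ S) (i : Fin g) :
    i ∈ S ↔ (i : ℕ) < S.card := by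
  have hIic : (Finset.Iic i).card = (i : ℕ) + 1 := by
    have he : Finset.Iic i
        = (Finset.univ : Finset (Fin g)).filter fun j : Fin g => 0 ≤ (j : ℕ) ∧ (j : ℕ) < (i : ℕ) + 1 := by
      ext j
      simp only [Finset.mem_Iic, Finset.mem_filter, Finset.mem_univ, true_and, Fin.le_def]
      omega
    rw [he, fin_card_Ico g 0 ((i : ℕ) + 1) i.isLt]
    omega
  have hIio : (Finset.Iio i).card = (i : ℕ) := by
    have he : Finset.Iio i
        = (Finset.univ : Finset (Fin g)).filter fun j : Fin g => 0 ≤ (j : ℕ) ∧ (j : ℕ) < (i : ℕ) := by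
      ext j
      simp only [Finset.mem_Iio, Finset.mem_filter, Finset.mem_univ, true_and, Fin.lt_def]
      omega
    rw [he, fin_card_Ico g 0 (i : ℕ) i.isLt.le]
    omega
  constructor
  · intro hi
    have h1 : Finset.Iic i ⊆ S := fun j hj => hS j i (Finset.mem_Iic.mp hj) hi
    have := Finset.card_le_card h1
    omega
  · intro hi
    by_contra hni
    have h2 : S ⊆ Finset.Iio i := by
      intro j hj
      rw [Finset.mem_Iio]
      by_contra hij
      exact hni (hS i j (not_lt.mp hij) hj)
    have := Finset.card_le_card h2
    omega

lemma strictMono_facts {γ ν : ℕ} (f : Fin γ → Fin ν) (hf : StrictMono f)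
    (Δ : Finset (Fin ν)) (hmem : ∀ i, f i ∈ Δ) (hcard : Δ.card = γ) :
    (∀ j ∈ Δ, ∃ i, f i = j) ∧
    ∀ t c : ℕ, (Δ.filter fun j : Fin ν => (j : ℕ) < t).card = c →
      ∀ i : Fin γ, ((f i : ℕ) < t ↔ (i : ℕ) < c) := by
  have himg : Finset.image f Finset.univ = Δ := by
    apply Finset.eq_of_subset_of_card_le
    · intro j hj; obtain ⟨i, _, rfl⟩ := Finset.mem_image.mp hj; exact hmem i
    · rw [hcard, Finset.card_image_of_injective _ hf.injective, Finset.card_univ,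
        Fintype.card_fin]
  constructor
  · intro j hj; rw [← himg] at hj; obtain ⟨i, _, rfl⟩ := Finset.mem_image.mp hj; exact ⟨i, rfl⟩
  · intro t c hc i
    have hScard : (Finset.univ.filter fun i : Fin γ => (f i : ℕ) < t).card = c := by
      have him2 : (Finset.univ.filter fun i : Fin γ => (f i : ℕ) < t).image f
          = Δ.filter fun j : Fin ν => (j : ℕ) < t := by
        rw [← himg, Finset.filter_image]
      rw [← hc, ← him2, Finset.card_image_of_injective _ hf.injective]
    have hlow : ∀ i j : Fin γ, i ≤ j →
        j ∈ (Finset.univ.filter fun i : Fin γ => (f i : ℕ) < t) →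
        i ∈ (Finset.univ.filter fun i : Fin γ => (f i : ℕ) < t) := by
      intro i j hij hj
      simp only [Finset.mem_filter, Finset.mem_univ, true_and] at *
      have : (f i : ℕ) ≤ (f j : ℕ) := hf.monotone hij
      omega
    have := fin_lower _ hlow i
    simp only [Finset.mem_filter, Finset.mem_univ, true_and, hScard] at this
    exact this

def cntB {N : ℕ} (x y : Fin N → Bool) (t : ℕ) : ℕ :=
  (Finset.univ.filter fun j => x j ≠ y j ∧ (j : ℕ) < t).card

lemma hd_card {N : ℕ} (x y : Fin N → Bool) :
    hammingDist x y = (Finset.univ.filter fun j => x j ≠ y j).card := rfl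

lemma cntB_zero {N : ℕ} (x y : Fin N → Bool) : cntB x y 0 = 0 := by
  unfold cntB
  rw [Finset.card_eq_zero]
  apply Finset.filter_false_of_mem
  intro j _
  simp

lemma cntB_all {N : ℕ} (x y : Fin N → Bool) (t : ℕ) (h : N ≤ t) :
    cntB x y t = hammingDist x y := by
  unfold cntB
  rw [hd_card]
  congr 1
  apply Finset.filter_congr
  intro j _
  have : (j : ℕ) < t := lt_of_lt_of_le j.isLt h
  simp [this]

lemma cntB_sum {N : ℕ} (x y : Fin N → Bool) (t : ℕ) :
    cntB x y t = ∑ j : Fin N, if x j ≠ y j ∧ (j : ℕ) < t then 1 else 0 :=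
  Finset.card_filter _ _

lemma hd_sum {N : ℕ} (x y : Fin N → Bool) :
    hammingDist x y = ∑ j : Fin N, if x j ≠ y j then 1 else 0 :=
  Finset.card_filter _ _

lemma cntB_append_left {p q : ℕ} (a a' : Fin p → Bool) (b b' : Fin q → Bool) (t : ℕ)
    (ht : t ≤ p) :
    cntB (Fin.append a b) (Fin.append a' b') t = cntB a a' t := by
  rw [cntB_sum, cntB_sum, Fin.sum_univ_add]
  simp only [Fin.append_left, Fin.append_right, Fin.coe_castAdd, Fin.coe_natAdd]
  have h2 : (∑ j : Fin q, if b j ≠ b' j ∧ p + (j : ℕ) < t then 1 else 0) = 0 := by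
    apply Finset.sum_eq_zero
    intro j _
    rw [if_neg]
    rintro ⟨-, h⟩
    omega
  omega

lemma cntB_append_full {p q : ℕ} (a a' : Fin p → Bool) (b b' : Fin q → Bool) (s : ℕ) :
    cntB (Fin.append a b) (Fin.append a' b') (p + s) = hammingDist a a' + cntB b b' s := by
  rw [cntB_sum, Fin.sum_univ_add, hd_sum, cntB_sum]
  simp only [Fin.append_left, Fin.append_right, Fin.coe_castAdd, Fin.coe_natAdd]
  congr 1
  · apply Finset.sum_congr rfl
    intro i _
    have : (i : ℕ) < p + s := by have := i.isLt; omega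
    simp [this]
  · apply Finset.sum_congr rfl
    intro j _
    have : (p + (j : ℕ) < p + s) ↔ ((j : ℕ) < s) := by omega
    exact if_congr (and_congr_right fun _ => this) rfl rfl

lemma hd_append {p q : ℕ} (a a' : Fin p → Bool) (b b' : Fin q → Bool) :
    hammingDist (Fin.append a b) (Fin.append a' b')
      = hammingDist a a' + hammingDist b b' := by
  rw [← cntB_all (Fin.append a b) (Fin.append a' b') (p + q) le_rfl, cntB_append_full,
    cntB_all b b' q le_rfl]

lemma hd_not_right {p : ℕ} (a c : Fin p → Bool) :
    hammingDist a (fun i => !(c i)) = p - hammingDist a c := by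
  have h : hammingDist a (fun i => !(c i)) + hammingDist a c = p := by
    rw [hd_card, hd_card]
    have he : (Finset.univ.filter fun j => a j ≠ !(c j))
        = Finset.univ.filter fun j => ¬(a j ≠ c j) := by
      apply Finset.filter_congr
      intro j _
      cases a j <;> cases c j <;> simp
    rw [he, add_comm]
    rw [Finset.card_filter_add_card_filter_not (fun j => a j ≠ c j)]
    simp
  omega

lemma hd_not_left {p : ℕ} (a c : Fin p → Bool) :
    hammingDist (fun i => !(a i)) c = p - hammingDist a c := by
  rw [hammingDist_comm, hd_not_right, hammingDist_comm]

lemma hd_not_not {p : ℕ} (a c : Fin p → Bool) :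
    hammingDist (fun i => !(a i)) (fun i => !(c i)) = hammingDist a c := by
  rw [hd_card, hd_card]
  congr 1
  apply Finset.filter_congr
  intro j _
  cases a j <;> cases c j <;> simp

lemma hd_false_true {p : ℕ} :
    hammingDist (fun _ : Fin p => false) (fun _ : Fin p => true) = p := by
  rw [hd_card]
  have : (Finset.univ.filter fun j : Fin p => (false : Bool) ≠ true) = Finset.univ := by
    apply Finset.filter_true_of_mem; intro j _; simp
  rw [this, Finset.card_univ, Fintype.card_fin]

lemma block_bound {n' p D : ℕ} (K : ℕ → Fin n' → Bool) (E : ℕ → Fin p → Bool)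
    (e : Fin p → Fin n') (he : Function.Injective e)
    (hKe : ∀ u i, K u (e i) = E u i) (lo hi : ℕ)
    (hrange : ∀ i : Fin p, lo ≤ (e i : ℕ) ∧ (e i : ℕ) < hi)
    (u u' : ℕ) (x y : Fin n' → Bool)
    (hE : D ≤ hammingDist (E u) (E u'))
    (hx : ∀ j : Fin n', lo ≤ (j : ℕ) → (j : ℕ) < hi → x j = K u j)
    (hy : ∀ j : Fin n', lo ≤ (j : ℕ) → (j : ℕ) < hi → y j = K u' j) :
    D ≤ hammingDist x y := by
  refine hE.trans ?_
  rw [hd_card, hd_card]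
  apply Finset.card_le_card_of_injOn e
  · intro i hi
    simp only [Finset.mem_coe, Finset.mem_filter, Finset.mem_univ, true_and] at *
    obtain ⟨h1, h2⟩ := hrange i
    rw [hx (e i) h1 h2, hy (e i) h1 h2, hKe, hKe]
    exact hi
  · exact fun a _ b _ h => he h

end GrayAux


/-- For the error-correcting Gray code `Genc` built from an injective code `Cenc` of
minimum distance `D` via the four-fold concatenation construction, values at distance
at least `D` have encodings at Hamming distance at least `D`. -/
theorem gray_code_large_dist (m d D : ℕ)
    (Cenc : ℕ → Fin d → Bool)
    (hinj : ∀ u < m, ∀ v < m, Cenc u = Cenc v → u = v)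
    (hdist : ∀ u < m, ∀ v < m, u ≠ v → D ≤ hammingDist (Cenc u) (Cenc v))
    (Lenc : ℕ → Fin (d + D) → Bool)
    (hL : ∀ v, Lenc v = if Even v then Fin.append (Cenc v) (fun _ => false)
        else Fin.append (fun i => !(Cenc v i)) (fun _ => true))
    (Kenc : ℕ → Fin (d + (d + D) + (d + (d + D))) → Bool)
    (hK : ∀ v, Kenc v =
      Fin.append (Fin.append (Cenc v) (Lenc v)) (Fin.append (Cenc v) (Lenc v)))
    (b : ℕ → Fin (2 * (d + D)) → Fin (d + (d + D) + (d + (d + D))))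
    (hmono : ∀ q, q + 1 < m → StrictMono (b q))
    (hdiffb : ∀ q, q + 1 < m → ∀ i, Kenc q (b q i) ≠ Kenc (q + 1) (b q i))
    (Genc : ℕ → Fin (d + (d + D) + (d + (d + D))) → Bool)
    (hG : ∀ q r, r < 2 * (d + D) → q * (2 * (d + D)) + r ≤ (m - 1) * (2 * (d + D)) →
      ∀ j, Genc (q * (2 * (d + D)) + r) j =
        if ∃ i : Fin (2 * (d + D)), (i : ℕ) < r ∧ b q i = j then Kenc (q + 1) j else Kenc q j)
    (v v' : ℕ) (hv : v ≤ (m - 1) * (2 * (d + D))) (hv' : v' ≤ (m - 1) * (2 * (d + D)))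
    (hfar : D ≤ Nat.dist v v') :
    D ≤ hammingDist (Genc v) (Genc v') := by
  classical
  rcases Nat.eq_zero_or_pos D with rfl | hD
  · exact Nat.zero_le _
  suffices key : ∀ w w' : ℕ, w ≤ (m - 1) * (2 * (d + D)) → w' ≤ (m - 1) * (2 * (d + D)) →
      w < w' → D ≤ w' - w → D ≤ hammingDist (Genc w) (Genc w') by
    rcases lt_trichotomy v v' with h | h | h
    · exact key v v' hv hv' h (by simp [Nat.dist] at hfar; omega)
    · subst h; simp [Nat.dist] at hfar; omega
    · rw [hammingDist_comm]; exact key v' v hv' hv h (by simp [Nat.dist] at hfar; omega)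
  intro w w' hwle hw'le hlt hfarD
  have hg : 0 < 2 * (d + D) := by omega
  obtain ⟨q, r, hr, rfl⟩ : ∃ q r, r < 2 * (d + D) ∧ w = q * (2 * (d + D)) + r :=
    ⟨w / (2 * (d + D)), w % (2 * (d + D)), Nat.mod_lt _ hg,
      by rw [Nat.mul_comm]; exact (Nat.div_add_mod w _).symm⟩
  obtain ⟨q', r', hr', rfl⟩ : ∃ q' r', r' < 2 * (d + D) ∧ w' = q' * (2 * (d + D)) + r' :=
    ⟨w' / (2 * (d + D)), w' % (2 * (d + D)), Nat.mod_lt _ hg,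
      by rw [Nat.mul_comm]; exact (Nat.div_add_mod w' _).symm⟩
  have hqle : q ≤ q' := by
    by_contra hqq
    push_neg at hqq
    have h1 : (q' + 1) * (2 * (d + D)) ≤ q * (2 * (d + D)) :=
      Nat.mul_le_mul_right _ (by omega)
    have h2 : (q' + 1) * (2 * (d + D)) = q' * (2 * (d + D)) + 2 * (d + D) := by ring
    omega
  have hq'm1 : q' ≤ m - 1 := by
    by_contra h
    push_neg at h
    have h1 : (m - 1 + 1) * (2 * (d + D)) ≤ q' * (2 * (d + D)) :=
      Nat.mul_le_mul_right _ (by omega)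
    have h2 : (m - 1 + 1) * (2 * (d + D)) = (m - 1) * (2 * (d + D)) + 2 * (d + D) := by ring
    omega
  have hm2 : 2 ≤ m := by
    by_contra h
    have hm1 : m - 1 = 0 := by omega
    rw [hm1, Nat.zero_mul] at hw'le
    omega
  have hr'q : 0 < r' → q' + 1 < m := by
    intro h
    by_contra hc
    have hc' : m - 1 ≤ q' := by omega
    have h1 : (m - 1) * (2 * (d + D)) ≤ q' * (2 * (d + D)) := Nat.mul_le_mul_right _ hc'
    omega
  rcases eq_or_lt_of_le hqle with rfl | hqlt
  · -- same q
    have hrr : r < r' := by omega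
    have hq1m : q + 1 < m := hr'q (by omega)
    have hDrr : D ≤ r' - r := by omega
    rw [GrayAux.hd_card]
    have hcard : (((Finset.univ : Finset (Fin (2 * (d + D)))).filter
        fun i : Fin (2 * (d + D)) => r ≤ (i : ℕ) ∧ (i : ℕ) < r').image (b q)).card = r' - r := by
      rw [Finset.card_image_of_injective _ (hmono q hq1m).injective,
        GrayAux.fin_card_Ico _ _ _ hr'.le]
    have hsub : (((Finset.univ : Finset (Fin (2 * (d + D)))).filter
        fun i : Fin (2 * (d + D)) => r ≤ (i : ℕ) ∧ (i : ℕ) < r').image (b q)) ⊆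
        Finset.univ.filter fun j =>
          Genc (q * (2 * (d + D)) + r) j ≠ Genc (q * (2 * (d + D)) + r') j := by
      intro j hj
      rw [Finset.mem_image] at hj
      obtain ⟨i, hi, rfl⟩ := hj
      rw [Finset.mem_filter] at hi
      obtain ⟨-, hir, hir'⟩ := hi
      rw [Finset.mem_filter]
      refine ⟨Finset.mem_univ _, ?_⟩
      rw [hG q r hr hwle, hG q r' hr' hw'le, if_neg, if_pos ⟨i, hir', rfl⟩]
      · exact hdiffb q hq1m i
      · rintro ⟨i', hi', he⟩
        have hii := (hmono q hq1m).injective he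
        subst hii
        omega
    calc D ≤ r' - r := hDrr
      _ = _ := hcard.symm
      _ ≤ _ := Finset.card_le_card hsub
  · -- q < q'
    have hq1m : q + 1 < m := by omega
    have hqm : q < m := by omega
    have hq'mlt : q' < m := by omega
    have hCle : ∀ u u' : ℕ, hammingDist (Cenc u) (Cenc u') ≤ d := fun u u' =>
      le_trans hammingDist_le_card_fintype (by simp)
    have hLpar : ∀ u u' : ℕ, (Even u ↔ Even u') →
        hammingDist (Lenc u) (Lenc u') = hammingDist (Cenc u) (Cenc u') := by
      intro u u' hp
      by_cases hu : Even u
      · rw [hL u, hL u', if_pos hu, if_pos (hp.mp hu), GrayAux.hd_append, hammingDist_self,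
          Nat.add_zero]
      · rw [hL u, hL u', if_neg hu, if_neg (fun h => hu (hp.mpr h)), GrayAux.hd_append,
          hammingDist_self, Nat.add_zero, GrayAux.hd_not_not]
    have hLoppo : ∀ u u' : ℕ, ¬(Even u ↔ Even u') →
        hammingDist (Lenc u) (Lenc u') = (d - hammingDist (Cenc u) (Cenc u')) + D := by
      intro u u' hp
      by_cases hu : Even u
      · have hu' : ¬Even u' := fun h => hp ⟨fun _ => h, fun _ => hu⟩
        rw [hL u, hL u', if_pos hu, if_neg hu', GrayAux.hd_append, GrayAux.hd_false_true,
          GrayAux.hd_not_right]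
      · have hu' : Even u' := by
          by_contra h
          exact hp ⟨fun hh => absurd hh hu, fun hh => absurd hh h⟩
        rw [hL u, hL u', if_neg hu, if_pos hu', GrayAux.hd_append, GrayAux.hd_not_left,
          hammingDist_comm (fun _ => (true : Bool)), GrayAux.hd_false_true]
    have hLD : ∀ u u' : ℕ, u < m → u' < m → u ≠ u' → D ≤ hammingDist (Lenc u) (Lenc u') := by
      intro u u' hu hu' hne
      by_cases hp : Even u ↔ Even u'
      · rw [hLpar u u' hp]; exact hdist u hu u' hu' hne
      · rw [hLoppo u u' hp]; omega
    -- embeddings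
    have hKe1 : ∀ u (i : Fin d),
        Kenc u (Fin.castAdd (d + (d + D)) (Fin.castAdd (d + D) i)) = Cenc u i := by
      intro u i; rw [hK u, Fin.append_left, Fin.append_left]
    have hKe2 : ∀ u (i : Fin (d + D)),
        Kenc u (Fin.castAdd (d + (d + D)) (Fin.natAdd d i)) = Lenc u i := by
      intro u i; rw [hK u, Fin.append_left, Fin.append_right]
    have hKe3 : ∀ u (i : Fin d),
        Kenc u (Fin.natAdd (d + (d + D)) (Fin.castAdd (d + D) i)) = Cenc u i := by
      intro u i; rw [hK u, Fin.append_right, Fin.append_left]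
    have hKe4 : ∀ u (i : Fin (d + D)),
        Kenc u (Fin.natAdd (d + (d + D)) (Fin.natAdd d i)) = Lenc u i := by
      intro u i; rw [hK u, Fin.append_right, Fin.append_right]
    have he1 : Function.Injective
        (fun i : Fin d => Fin.castAdd (d + (d + D)) (Fin.castAdd (d + D) i)) := by
      intro i j h
      have h2 : (i : ℕ) = (j : ℕ) := by simpa using congrArg Fin.val h
      exact Fin.ext h2
    have he2 : Function.Injective
        (fun i : Fin (d + D) => Fin.castAdd (d + (d + D)) (Fin.natAdd d i)) := by
      intro i j h
      have h2 : d + (i : ℕ) = d + (j : ℕ) := by simpa using congrArg Fin.val h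
      exact Fin.ext (by omega)
    have he3 : Function.Injective
        (fun i : Fin d => Fin.natAdd (d + (d + D)) (Fin.castAdd (d + D) i)) := by
      intro i j h
      have h2 : d + (d + D) + (i : ℕ) = d + (d + D) + (j : ℕ) := by
        simpa using congrArg Fin.val h
      exact Fin.ext (by omega)
    have he4 : Function.Injective
        (fun i : Fin (d + D) => Fin.natAdd (d + (d + D)) (Fin.natAdd d i)) := by
      intro i j h
      have h2 : d + (d + D) + (d + (i : ℕ)) = d + (d + D) + (d + (j : ℕ)) := by
        simpa using congrArg Fin.val h
      exact Fin.ext (by omega)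
    have hrange1 : ∀ i : Fin d,
        0 ≤ ((Fin.castAdd (d + (d + D)) (Fin.castAdd (d + D) i) : Fin (d + (d + D) + (d + (d + D)))) : ℕ) ∧
        ((Fin.castAdd (d + (d + D)) (Fin.castAdd (d + D) i) : Fin (d + (d + D) + (d + (d + D)))) : ℕ) < d := by
      intro i; have h := i.isLt
      constructor <;> simp only [Fin.coe_castAdd, Fin.coe_natAdd] <;> omega
    have hrange2 : ∀ i : Fin (d + D),
        d ≤ ((Fin.castAdd (d + (d + D)) (Fin.natAdd d i) : Fin (d + (d + D) + (d + (d + D)))) : ℕ) ∧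
        ((Fin.castAdd (d + (d + D)) (Fin.natAdd d i) : Fin (d + (d + D) + (d + (d + D)))) : ℕ) < d + (d + D) := by
      intro i; have h := i.isLt
      constructor <;> simp only [Fin.coe_castAdd, Fin.coe_natAdd] <;> omega
    have hrange3 : ∀ i : Fin d,
        d + (d + D) ≤ ((Fin.natAdd (d + (d + D)) (Fin.castAdd (d + D) i) : Fin (d + (d + D) + (d + (d + D)))) : ℕ) ∧
        ((Fin.natAdd (d + (d + D)) (Fin.castAdd (d + D) i) : Fin (d + (d + D) + (d + (d + D)))) : ℕ) < d + (d + D) + d := by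
      intro i; have h := i.isLt
      constructor <;> simp only [Fin.coe_castAdd, Fin.coe_natAdd] <;> omega
    have hrange4 : ∀ i : Fin (d + D),
        d + (d + D) + d ≤ ((Fin.natAdd (d + (d + D)) (Fin.natAdd d i) : Fin (d + (d + D) + (d + (d + D)))) : ℕ) ∧
        ((Fin.natAdd (d + (d + D)) (Fin.natAdd d i) : Fin (d + (d + D) + (d + (d + D)))) : ℕ) < d + (d + D) + (d + (d + D)) := by
      intro i; have h := i.isLt
      constructor <;> simp only [Fin.coe_castAdd, Fin.coe_natAdd] <;> omega
    -- K distance and counts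
    have hpar : ∀ Q : ℕ, ¬(Even Q ↔ Even (Q + 1)) := by
      intro Q h
      rcases Nat.even_or_odd Q with he | ho
      · have := h.mp he
        rw [Nat.even_add_one] at this
        exact this he
      · have h1 : ¬Even Q := Nat.not_even_iff_odd.mpr ho
        have h2 : Even (Q + 1) := by rw [Nat.even_add_one]; exact h1
        exact h1 (h.mpr h2)
    have hKdist : ∀ Q : ℕ, hammingDist (Kenc Q) (Kenc (Q + 1)) = 2 * (d + D) := by
      intro Q
      rw [hK Q, hK (Q + 1), GrayAux.hd_append, GrayAux.hd_append, hLoppo Q (Q + 1) (hpar Q)]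
      have := hCle Q (Q + 1)
      omega
    have hcnt1 : ∀ Q : ℕ, GrayAux.cntB (Kenc Q) (Kenc (Q + 1)) d
        = hammingDist (Cenc Q) (Cenc (Q + 1)) := by
      intro Q
      rw [hK Q, hK (Q + 1), GrayAux.cntB_append_left _ _ _ _ _ (by omega : d ≤ d + (d + D)),
        GrayAux.cntB_append_left _ _ _ _ _ (le_refl d), GrayAux.cntB_all _ _ _ (le_refl d)]
    have hcnt2 : ∀ Q : ℕ, GrayAux.cntB (Kenc Q) (Kenc (Q + 1)) (d + (d + D)) = d + D := by
      intro Q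
      rw [hK Q, hK (Q + 1)]
      have h0 : GrayAux.cntB
          (Fin.append (Fin.append (Cenc Q) (Lenc Q)) (Fin.append (Cenc Q) (Lenc Q)))
          (Fin.append (Fin.append (Cenc (Q + 1)) (Lenc (Q + 1)))
            (Fin.append (Cenc (Q + 1)) (Lenc (Q + 1)))) (d + (d + D))
          = hammingDist (Fin.append (Cenc Q) (Lenc Q)) (Fin.append (Cenc (Q + 1)) (Lenc (Q + 1)))
            + GrayAux.cntB (Fin.append (Cenc Q) (Lenc Q))
              (Fin.append (Cenc (Q + 1)) (Lenc (Q + 1))) 0 :=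
        GrayAux.cntB_append_full (Fin.append (Cenc Q) (Lenc Q))
          (Fin.append (Cenc (Q + 1)) (Lenc (Q + 1))) (Fin.append (Cenc Q) (Lenc Q))
          (Fin.append (Cenc (Q + 1)) (Lenc (Q + 1))) 0
      rw [h0, GrayAux.cntB_zero, GrayAux.hd_append, hLoppo Q (Q + 1) (hpar Q)]
      have := hCle Q (Q + 1)
      omega
    have hcnt3 : ∀ Q : ℕ, GrayAux.cntB (Kenc Q) (Kenc (Q + 1)) (d + (d + D) + d)
        = (d + D) + hammingDist (Cenc Q) (Cenc (Q + 1)) := by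
      intro Q
      rw [hK Q, hK (Q + 1)]
      have h0 := GrayAux.cntB_append_full (Fin.append (Cenc Q) (Lenc Q))
        (Fin.append (Cenc (Q + 1)) (Lenc (Q + 1))) (Fin.append (Cenc Q) (Lenc Q))
        (Fin.append (Cenc (Q + 1)) (Lenc (Q + 1))) d
      rw [h0, GrayAux.cntB_append_left _ _ _ _ _ (le_refl d),
        GrayAux.cntB_all _ _ _ (le_refl d), GrayAux.hd_append, hLoppo Q (Q + 1) (hpar Q)]
      have := hCle Q (Q + 1)
      omega
    have hfacts : ∀ Q : ℕ, Q + 1 < m →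
        (∀ j, Kenc Q j ≠ Kenc (Q + 1) j → ∃ i, b Q i = j) ∧
        (∀ t c : ℕ, GrayAux.cntB (Kenc Q) (Kenc (Q + 1)) t = c →
          ∀ i : Fin (2 * (d + D)), ((b Q i : ℕ) < t ↔ (i : ℕ) < c)) := by
      intro Q hQ
      have hΔcard : ((Finset.univ : Finset (Fin (d + (d + D) + (d + (d + D))))).filter
          fun j => Kenc Q j ≠ Kenc (Q + 1) j).card = 2 * (d + D) := by
        rw [← GrayAux.hd_card]
        exact hKdist Q
      obtain ⟨hsurj, hcount⟩ := GrayAux.strictMono_facts (b Q) (hmono Q hQ) _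
        (fun i => Finset.mem_filter.mpr ⟨Finset.mem_univ _, hdiffb Q hQ i⟩) hΔcard
      refine ⟨fun j hj => ?_, fun t c hc i => ?_⟩
      · exact hsurj j (Finset.mem_filter.mpr ⟨Finset.mem_univ _, hj⟩)
      · apply hcount t c _ i
        rw [Finset.filter_filter]
        exact hc
    obtain ⟨SURJq, Oq⟩ := hfacts q hq1m
    have Ow1 := Oq d (hammingDist (Cenc q) (Cenc (q + 1))) (hcnt1 q)
    have Ow2 := Oq (d + (d + D)) (d + D) (hcnt2 q)
    have Ow3 := Oq (d + (d + D) + d) ((d + D) + hammingDist (Cenc q) (Cenc (q + 1))) (hcnt3 q)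
    have hb1 : D ≤ hammingDist (Cenc q) (Cenc (q + 1)) := hdist q hqm (q + 1) hq1m (by omega)
    have hb1d : hammingDist (Cenc q) (Cenc (q + 1)) ≤ d := hCle q (q + 1)
    -- word-level weapons for w
    have HUw : ∀ T : ℕ, (∀ i : Fin (2 * (d + D)), (i : ℕ) < r → ((b q i : ℕ) < T)) →
        ∀ j : Fin (d + (d + D) + (d + (d + D))), T ≤ (j : ℕ) → Genc (q * (2 * (d + D)) + r) j = Kenc q j := by
      intro T hflip j hTj
      rw [hG q r hr hwle, if_neg]
      rintro ⟨i, hir, rfl⟩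
      exact absurd (hflip i hir) (by omega)
    have HFw : ∀ T : ℕ, (∀ i : Fin (2 * (d + D)), ((b q i : ℕ) < T) → (i : ℕ) < r) →
        ∀ j : Fin (d + (d + D) + (d + (d + D))), (j : ℕ) < T → Genc (q * (2 * (d + D)) + r) j = Kenc (q + 1) j := by
      intro T hcov j hjT
      rw [hG q r hr hwle]
      split_ifs with hex
      · rfl
      · by_contra hne
        obtain ⟨i, rfl⟩ := SURJq j hne
        exact hex ⟨i, hcov i hjT, rfl⟩
    -- HBA: the prefix/suffix flip-count argument (adjacent blocks)
    have HBA : ∀ T : ℕ, q' = q + 1 →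
        (∀ i : Fin (2 * (d + D)), r ≤ (i : ℕ) → T ≤ (b q i : ℕ)) →
        (∀ i : Fin (2 * (d + D)), (i : ℕ) < r' → ((b q' i : ℕ) < T)) →
        (∀ j : Fin (d + (d + D) + (d + (d + D))), T ≤ (j : ℕ) → Genc (q' * (2 * (d + D)) + r') j = Kenc q' j) →
        (∀ j : Fin (d + (d + D) + (d + (d + D))), (j : ℕ) < T → Genc (q * (2 * (d + D)) + r) j = Kenc (q + 1) j) →
        D ≤ hammingDist (Genc (q * (2 * (d + D)) + r)) (Genc (q' * (2 * (d + D)) + r')) := by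
      intro T hadj hS1pos hS2pos hhi hlo
      have hDsum : D ≤ (2 * (d + D) - r) + r' := by
        have e : q' * (2 * (d + D)) = q * (2 * (d + D)) + 2 * (d + D) := by rw [hadj]; ring
        omega
      have hc1 : (((Finset.univ : Finset (Fin (2 * (d + D)))).filter
          fun i : Fin (2 * (d + D)) => r ≤ (i : ℕ) ∧ (i : ℕ) < 2 * (d + D)).image (b q)).card
          = 2 * (d + D) - r := by
        rw [Finset.card_image_of_injective _ (hmono q hq1m).injective,
          GrayAux.fin_card_Ico _ _ _ (le_refl _)]
      have hc2 : (((Finset.univ : Finset (Fin (2 * (d + D)))).filter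
          fun i : Fin (2 * (d + D)) => 0 ≤ (i : ℕ) ∧ (i : ℕ) < r').image (b q')).card = r' := by
        rcases Nat.eq_zero_or_pos r' with h0 | hpos
        · have hemp : ((Finset.univ : Finset (Fin (2 * (d + D)))).filter
              fun i : Fin (2 * (d + D)) => 0 ≤ (i : ℕ) ∧ (i : ℕ) < r') = ∅ := by
            apply Finset.filter_false_of_mem
            intro i _
            omega
          rw [hemp, Finset.image_empty, Finset.card_empty, h0]
        · rw [Finset.card_image_of_injective _ (hmono q' (hr'q hpos)).injective,
            GrayAux.fin_card_Ico _ _ _ hr'.le]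
          omega
      have hdisj : Disjoint
          (((Finset.univ : Finset (Fin (2 * (d + D)))).filter
            fun i : Fin (2 * (d + D)) => r ≤ (i : ℕ) ∧ (i : ℕ) < 2 * (d + D)).image (b q))
          (((Finset.univ : Finset (Fin (2 * (d + D)))).filter
            fun i : Fin (2 * (d + D)) => 0 ≤ (i : ℕ) ∧ (i : ℕ) < r').image (b q')) := by
        rw [Finset.disjoint_left]
        intro j hj1 hj2
        rw [Finset.mem_image] at hj1 hj2
        obtain ⟨i, hi, rfl⟩ := hj1
        obtain ⟨i', hi', he⟩ := hj2
        rw [Finset.mem_filter] at hi hi'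
        have h1 := hS1pos i hi.2.1
        have h2 := hS2pos i' hi'.2.2
        rw [he] at h2
        omega
      have hsub : (((Finset.univ : Finset (Fin (2 * (d + D)))).filter
            fun i : Fin (2 * (d + D)) => r ≤ (i : ℕ) ∧ (i : ℕ) < 2 * (d + D)).image (b q))
          ∪ (((Finset.univ : Finset (Fin (2 * (d + D)))).filter
            fun i : Fin (2 * (d + D)) => 0 ≤ (i : ℕ) ∧ (i : ℕ) < r').image (b q'))
          ⊆ Finset.univ.filter fun j =>
            Genc (q * (2 * (d + D)) + r) j ≠ Genc (q' * (2 * (d + D)) + r') j := by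
        intro j hj
        rw [Finset.mem_union] at hj
        rw [Finset.mem_filter]
        refine ⟨Finset.mem_univ _, ?_⟩
        rcases hj with hj | hj
        · rw [Finset.mem_image] at hj
          obtain ⟨i, hi, rfl⟩ := hj
          rw [Finset.mem_filter] at hi
          have hGw : Genc (q * (2 * (d + D)) + r) (b q i) = Kenc q (b q i) := by
            rw [hG q r hr hwle, if_neg]
            rintro ⟨i', hi', he⟩
            have hii := (hmono q hq1m).injective he
            subst hii
            omega
          have hGw' : Genc (q' * (2 * (d + D)) + r') (b q i) = Kenc (q + 1) (b q i) := by
            rw [hhi _ (hS1pos i hi.2.1), hadj]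
          rw [hGw, hGw']
          exact hdiffb q hq1m i
        · rw [Finset.mem_image] at hj
          obtain ⟨i, hi, rfl⟩ := hj
          rw [Finset.mem_filter] at hi
          have hpos : 0 < r' := by omega
          have hGw' : Genc (q' * (2 * (d + D)) + r') (b q' i) = Kenc (q' + 1) (b q' i) := by
            rw [hG q' r' hr' hw'le, if_pos ⟨i, hi.2.2, rfl⟩]
          have hGw : Genc (q * (2 * (d + D)) + r) (b q' i) = Kenc q' (b q' i) := by
            rw [hlo _ (hS2pos i hi.2.2), hadj]
          rw [hGw, hGw']
          exact hdiffb q' (hr'q hpos) i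
      rw [GrayAux.hd_card]
      calc D ≤ (2 * (d + D) - r) + r' := hDsum
        _ = _ + _ := by rw [hc1, hc2]
        _ = _ := (Finset.card_union_of_disjoint hdisj).symm
        _ ≤ _ := Finset.card_le_card hsub
    rcases Nat.eq_zero_or_pos r' with hr'0 | hr'pos
    · -- r' = 0
      subst hr'0
      have hw'K : ∀ j : Fin (d + (d + D) + (d + (d + D))),
          Genc (q' * (2 * (d + D)) + 0) j = Kenc q' j := by
        intro j
        rw [hG q' 0 (by omega) hw'le, if_neg]
        rintro ⟨i, hi, -⟩
        omega
      rcases le_or_gt r ((d + D) + hammingDist (Cenc q) (Cenc (q + 1))) with hsplit | hsplit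
      · refine GrayAux.block_bound Kenc Lenc
          (fun i : Fin (d + D) => Fin.natAdd (d + (d + D)) (Fin.natAdd d i)) he4 hKe4
          (d + (d + D) + d) (d + (d + D) + (d + (d + D))) hrange4 q q' _ _
          (hLD q q' hqm hq'mlt (by omega)) ?_ ?_
        · intro j hjlo _
          exact HUw (d + (d + D) + d) (fun i hi => (Ow3 i).mpr (by omega)) j hjlo
        · intro j _ _
          exact hw'K j
      · by_cases hadj : q' = q + 1
        · apply HBA (d + (d + D) + d) hadj
          · intro i hi
            refine le_of_not_gt fun hlti => ?_
            have := (Ow3 i).mp hlti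
            omega
          · intro i hi
            omega
          · intro j _
            exact hw'K j
          · intro j hj
            exact HFw (d + (d + D) + d) (fun i hvi => by have := (Ow3 i).mp hvi; omega) j hj
        · refine GrayAux.block_bound Kenc Cenc
            (fun i : Fin d => Fin.castAdd (d + (d + D)) (Fin.castAdd (d + D) i)) he1 hKe1
            0 d hrange1 (q + 1) q' _ _
            (hdist (q + 1) hq1m q' hq'mlt (by omega)) ?_ ?_
          · intro j _ hjd
            exact HFw d (fun i hvi => by have := (Ow1 i).mp hvi; omega) j hjd
          · intro j _ _
            exact hw'K j
    · -- r' > 0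
      have hq'1m : q' + 1 < m := hr'q hr'pos
      obtain ⟨SURJq', Oq'⟩ := hfacts q' hq'1m
      have O'1 := Oq' d (hammingDist (Cenc q') (Cenc (q' + 1))) (hcnt1 q')
      have O'2 := Oq' (d + (d + D)) (d + D) (hcnt2 q')
      have O'3 := Oq' (d + (d + D) + d) ((d + D) + hammingDist (Cenc q') (Cenc (q' + 1))) (hcnt3 q')
      have hb2 : D ≤ hammingDist (Cenc q') (Cenc (q' + 1)) :=
        hdist q' hq'mlt (q' + 1) hq'1m (by omega)
      have hb2d : hammingDist (Cenc q') (Cenc (q' + 1)) ≤ d := hCle q' (q' + 1)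
      have HUw' : ∀ T : ℕ, (∀ i : Fin (2 * (d + D)), (i : ℕ) < r' → ((b q' i : ℕ) < T)) →
          ∀ j : Fin (d + (d + D) + (d + (d + D))), T ≤ (j : ℕ) →
            Genc (q' * (2 * (d + D)) + r') j = Kenc q' j := by
        intro T hflip j hTj
        rw [hG q' r' hr' hw'le, if_neg]
        rintro ⟨i, hir, rfl⟩
        exact absurd (hflip i hir) (by omega)
      have HFw' : ∀ T : ℕ, (∀ i : Fin (2 * (d + D)), ((b q' i : ℕ) < T) → (i : ℕ) < r') →
          ∀ j : Fin (d + (d + D) + (d + (d + D))), (j : ℕ) < T →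
            Genc (q' * (2 * (d + D)) + r') j = Kenc (q' + 1) j := by
        intro T hcov j hjT
        rw [hG q' r' hr' hw'le]
        split_ifs with hex
        · rfl
        · by_contra hne
          obtain ⟨i, rfl⟩ := SURJq' j hne
          exact hex ⟨i, hcov i hjT, rfl⟩
      have P123 : ((r ≤ 0 ∨ hammingDist (Cenc q) (Cenc (q + 1)) ≤ r) ∧
            (r' ≤ 0 ∨ hammingDist (Cenc q') (Cenc (q' + 1)) ≤ r')) ∨
          ((r ≤ hammingDist (Cenc q) (Cenc (q + 1)) ∨ d + D ≤ r) ∧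
            (r' ≤ hammingDist (Cenc q') (Cenc (q' + 1)) ∨ d + D ≤ r')) ∨
          ((r ≤ d + D ∨ (d + D) + hammingDist (Cenc q) (Cenc (q + 1)) ≤ r) ∧
            (r' ≤ d + D ∨ (d + D) + hammingDist (Cenc q') (Cenc (q' + 1)) ≤ r')) := by
        omega
      rcases P123 with ⟨hA, hB⟩ | ⟨hA, hB⟩ | ⟨hA, hB⟩
      · -- block 1
        rcases hA with hA | hA <;> rcases hB with hB | hB
        · omega
        · refine GrayAux.block_bound Kenc Cenc
            (fun i : Fin d => Fin.castAdd (d + (d + D)) (Fin.castAdd (d + D) i)) he1 hKe1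
            0 d hrange1 q (q' + 1) _ _
            (hdist q hqm (q' + 1) hq'1m (by omega)) ?_ ?_
          · intro j hj0 _
            exact HUw 0 (fun i hi => absurd hi (by omega)) j hj0
          · intro j _ hjd
            exact HFw' d (fun i hvi => by have := (O'1 i).mp hvi; omega) j hjd
        · omega
        · refine GrayAux.block_bound Kenc Cenc
            (fun i : Fin d => Fin.castAdd (d + (d + D)) (Fin.castAdd (d + D) i)) he1 hKe1
            0 d hrange1 (q + 1) (q' + 1) _ _
            (hdist (q + 1) hq1m (q' + 1) hq'1m (by omega)) ?_ ?_
          · intro j _ hjd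
            exact HFw d (fun i hvi => by have := (Ow1 i).mp hvi; omega) j hjd
          · intro j _ hjd
            exact HFw' d (fun i hvi => by have := (O'1 i).mp hvi; omega) j hjd
      · -- block 2
        rcases hA with hA | hA <;> rcases hB with hB | hB
        · refine GrayAux.block_bound Kenc Lenc
            (fun i : Fin (d + D) => Fin.castAdd (d + (d + D)) (Fin.natAdd d i)) he2 hKe2
            d (d + (d + D)) hrange2 q q' _ _
            (hLD q q' hqm hq'mlt (by omega)) ?_ ?_
          · intro j hjlo _
            exact HUw d (fun i hi => (Ow1 i).mpr (by omega)) j hjlo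
          · intro j hjlo _
            exact HUw' d (fun i hi => (O'1 i).mpr (by omega)) j hjlo
        · refine GrayAux.block_bound Kenc Lenc
            (fun i : Fin (d + D) => Fin.castAdd (d + (d + D)) (Fin.natAdd d i)) he2 hKe2
            d (d + (d + D)) hrange2 q (q' + 1) _ _
            (hLD q (q' + 1) hqm hq'1m (by omega)) ?_ ?_
          · intro j hjlo _
            exact HUw d (fun i hi => (Ow1 i).mpr (by omega)) j hjlo
          · intro j _ hjhi
            exact HFw' (d + (d + D)) (fun i hvi => by have := (O'2 i).mp hvi; omega) j hjhi
        · by_cases hadj : q' = q + 1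
          · apply HBA (d + (d + D)) hadj
            · intro i hi
              refine le_of_not_gt fun hlti => ?_
              have := (Ow2 i).mp hlti
              omega
            · intro i hi
              exact (O'2 i).mpr (by omega)
            · intro j hj
              exact HUw' (d + (d + D)) (fun i hi => (O'2 i).mpr (by omega)) j hj
            · intro j hj
              exact HFw (d + (d + D)) (fun i hvi => by have := (Ow2 i).mp hvi; omega) j hj
          · refine GrayAux.block_bound Kenc Lenc
              (fun i : Fin (d + D) => Fin.castAdd (d + (d + D)) (Fin.natAdd d i)) he2 hKe2
              d (d + (d + D)) hrange2 (q + 1) q' _ _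
              (hLD (q + 1) q' hq1m hq'mlt (by omega)) ?_ ?_
            · intro j _ hjhi
              exact HFw (d + (d + D)) (fun i hvi => by have := (Ow2 i).mp hvi; omega) j hjhi
            · intro j hjlo _
              exact HUw' d (fun i hi => (O'1 i).mpr (by omega)) j hjlo
        · refine GrayAux.block_bound Kenc Lenc
            (fun i : Fin (d + D) => Fin.castAdd (d + (d + D)) (Fin.natAdd d i)) he2 hKe2
            d (d + (d + D)) hrange2 (q + 1) (q' + 1) _ _
            (hLD (q + 1) (q' + 1) hq1m hq'1m (by omega)) ?_ ?_
          · intro j _ hjhi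
            exact HFw (d + (d + D)) (fun i hvi => by have := (Ow2 i).mp hvi; omega) j hjhi
          · intro j _ hjhi
            exact HFw' (d + (d + D)) (fun i hvi => by have := (O'2 i).mp hvi; omega) j hjhi
      · -- block 3
        rcases hA with hA | hA <;> rcases hB with hB | hB
        · refine GrayAux.block_bound Kenc Cenc
            (fun i : Fin d => Fin.natAdd (d + (d + D)) (Fin.castAdd (d + D) i)) he3 hKe3
            (d + (d + D)) (d + (d + D) + d) hrange3 q q' _ _
            (hdist q hqm q' hq'mlt (by omega)) ?_ ?_
          · intro j hjlo _
            exact HUw (d + (d + D)) (fun i hi => (Ow2 i).mpr (by omega)) j hjlo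
          · intro j hjlo _
            exact HUw' (d + (d + D)) (fun i hi => (O'2 i).mpr (by omega)) j hjlo
        · refine GrayAux.block_bound Kenc Cenc
            (fun i : Fin d => Fin.natAdd (d + (d + D)) (Fin.castAdd (d + D) i)) he3 hKe3
            (d + (d + D)) (d + (d + D) + d) hrange3 q (q' + 1) _ _
            (hdist q hqm (q' + 1) hq'1m (by omega)) ?_ ?_
          · intro j hjlo _
            exact HUw (d + (d + D)) (fun i hi => (Ow2 i).mpr (by omega)) j hjlo
          · intro j _ hjhi
            exact HFw' (d + (d + D) + d) (fun i hvi => by have := (O'3 i).mp hvi; omega) j hjhi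
        · by_cases hadj : q' = q + 1
          · apply HBA (d + (d + D) + d) hadj
            · intro i hi
              refine le_of_not_gt fun hlti => ?_
              have := (Ow3 i).mp hlti
              omega
            · intro i hi
              exact (O'3 i).mpr (by omega)
            · intro j hj
              exact HUw' (d + (d + D) + d) (fun i hi => (O'3 i).mpr (by omega)) j hj
            · intro j hj
              exact HFw (d + (d + D) + d) (fun i hvi => by have := (Ow3 i).mp hvi; omega) j hj
          · refine GrayAux.block_bound Kenc Cenc
              (fun i : Fin d => Fin.natAdd (d + (d + D)) (Fin.castAdd (d + D) i)) he3 hKe3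
              (d + (d + D)) (d + (d + D) + d) hrange3 (q + 1) q' _ _
              (hdist (q + 1) hq1m q' hq'mlt (by omega)) ?_ ?_
            · intro j _ hjhi
              exact HFw (d + (d + D) + d) (fun i hvi => by have := (Ow3 i).mp hvi; omega) j hjhi
            · intro j hjlo _
              exact HUw' (d + (d + D)) (fun i hi => (O'2 i).mpr (by omega)) j hjlo
        · refine GrayAux.block_bound Kenc Cenc
            (fun i : Fin d => Fin.natAdd (d + (d + D)) (Fin.castAdd (d + D) i)) he3 hKe3
            (d + (d + D)) (d + (d + D) + d) hrange3 (q + 1) (q' + 1) _ _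
            (hdist (q + 1) hq1m (q' + 1) hq'1m (by omega)) ?_ ?_
          · intro j _ hjhi
            exact HFw (d + (d + D) + d) (fun i hvi => by have := (Ow3 i).mp hvi; omega) j hjhi
          · intro j _ hjhi
            exact HFw' (d + (d + D) + d) (fun i hvi => by have := (O'3 i).mp hvi; omega) j hjhi
end

section
/- Let G_enc be the error-correcting Gray code built from an injective code C_enc with minimum distance D(C) via the four-fold concatenation construction. Then G_enc is injective. -/
private lemma gc_card_val (g a c : ℕ) (hc : c ≤ g) :
    (Finset.univ.filter fun i : Fin g => a ≤ (i:ℕ) ∧ (i:ℕ) < c).card = c - a := by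
  rw [← Finset.card_image_of_injective _ Fin.val_injective]
  have h : (Finset.univ.filter fun i : Fin g => a ≤ (i:ℕ) ∧ (i:ℕ) < c).image Fin.val
      = Finset.Ico a c := by
    ext n
    simp only [Finset.mem_image, Finset.mem_filter, Finset.mem_univ, true_and, Finset.mem_Ico]
    constructor
    · rintro ⟨i, ⟨h1, h2⟩, rfl⟩; exact ⟨h1, h2⟩
    · rintro ⟨h1, h2⟩; exact ⟨⟨n, by omega⟩, ⟨h1, h2⟩, rfl⟩
  rw [h, Nat.card_Ico]

private lemma gc_split (n : ℕ) (p : Fin (n + n) → Prop) [DecidablePred p] :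
    (Finset.univ.filter p).card
      = (∑ i : Fin n, if p (Fin.castAdd n i) then 1 else 0)
        + (∑ i : Fin n, if p (Fin.natAdd n i) then 1 else 0) := by
  rw [Finset.card_filter, Fin.sum_univ_add]

private lemma gc_bool1 : ∀ x y : Bool,
    ((if x ≠ y then (1:ℕ) else 0) + (if x ≠ !y then 1 else 0)) = 1 := by decide
private lemma gc_bool2 : ∀ x y : Bool,
    ((if x ≠ y then (1:ℕ) else 0) + (if (!x) ≠ y then 1 else 0)) = 1 := by decide

private lemma gc_sumM (d D : ℕ) (C : ℕ → Fin d → Bool) (L : ℕ → Fin (d + D) → Bool)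
    (hL : ∀ v, L v = if Even v then Fin.append (C v) (fun _ => false)
        else Fin.append (fun i => !(C v i)) (fun _ => true))
    (a b : ℕ) (hab : a % 2 ≠ b % 2) :
    (∑ j : Fin (d + (d + D)),
      if Fin.append (C a) (L a) j ≠ Fin.append (C b) (L b) j then 1 else 0) = d + D := by
  rw [Fin.sum_univ_add]
  simp only [Fin.append_left, Fin.append_right]
  rcases Nat.even_or_odd a with ha | ha <;> rcases Nat.even_or_odd b with hb | hb
  · rw [Nat.even_iff] at ha hb; omega
  · rw [hL a, hL b, if_pos ha, if_neg (Nat.not_even_iff_odd.mpr hb)]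
    rw [Fin.sum_univ_add]
    simp only [Fin.append_left, Fin.append_right]
    have h1 : (∑ i : Fin d, if C a i ≠ C b i then (1:ℕ) else 0)
        + (∑ i : Fin d, if C a i ≠ !(C b i) then (1:ℕ) else 0) = d := by
      rw [← Finset.sum_add_distrib, Finset.sum_congr rfl (fun i _ => gc_bool1 (C a i) (C b i))]
      simp
    have h2 : (∑ _i : Fin D, if (false : Bool) ≠ true then (1:ℕ) else 0) = D := by simp
    omega
  · rw [hL a, hL b, if_neg (Nat.not_even_iff_odd.mpr ha), if_pos hb]
    rw [Fin.sum_univ_add]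
    simp only [Fin.append_left, Fin.append_right]
    have h1 : (∑ i : Fin d, if C a i ≠ C b i then (1:ℕ) else 0)
        + (∑ i : Fin d, if (!(C a i)) ≠ C b i then (1:ℕ) else 0) = d := by
      rw [← Finset.sum_add_distrib, Finset.sum_congr rfl (fun i _ => gc_bool2 (C a i) (C b i))]
      simp
    have h2 : (∑ _i : Fin D, if (true : Bool) ≠ false then (1:ℕ) else 0) = D := by simp
    omega
  · rw [Nat.odd_iff] at ha hb; omega

section
variable (d D : ℕ) (C : ℕ → Fin d → Bool) (L : ℕ → Fin (d + D) → Bool)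
    (hL : ∀ v, L v = if Even v then Fin.append (C v) (fun _ => false)
        else Fin.append (fun i => !(C v i)) (fun _ => true))
    (K : ℕ → Fin (d + (d + D) + (d + (d + D))) → Bool)
    (hK : ∀ v, K v = Fin.append (Fin.append (C v) (L v)) (Fin.append (C v) (L v)))

include hL hK in
private lemma gc_cnt2 (a b : ℕ) (hab : a % 2 ≠ b % 2) :
    (Finset.univ.filter fun j : Fin (d + (d + D) + (d + (d + D))) =>
      d + (d + D) ≤ (j : ℕ) ∧ K a j ≠ K b j).card = d + D := by
  rw [gc_split (d + (d + D))]
  have h1 : (∑ i : Fin (d + (d+D)), if d + (d + D) ≤ ((Fin.castAdd (d + (d+D)) i : Fin _) : ℕ) ∧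
      K a (Fin.castAdd _ i) ≠ K b (Fin.castAdd _ i) then 1 else 0) = 0 := by
    apply Finset.sum_eq_zero
    intro i _
    rw [if_neg]
    rintro ⟨h1, -⟩
    simp only [Fin.coe_castAdd] at h1
    omega
  have h2 : (∑ i : Fin (d + (d+D)), if d + (d + D) ≤ ((Fin.natAdd (d + (d+D)) i : Fin _) : ℕ) ∧
      K a (Fin.natAdd _ i) ≠ K b (Fin.natAdd _ i) then 1 else 0)
      = (∑ j : Fin (d + (d + D)),
        if Fin.append (C a) (L a) j ≠ Fin.append (C b) (L b) j then 1 else 0) := by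
    apply Finset.sum_congr rfl
    intro i _
    rw [hK a, hK b]
    simp only [Fin.append_right, Fin.coe_natAdd]
    rw [if_congr (and_iff_right (by omega)) rfl rfl]
  rw [h1, h2, gc_sumM d D C L hL a b hab]
  omega

include hL hK in
private lemma gc_cnt1 (a b : ℕ) (hab : a % 2 ≠ b % 2) :
    (Finset.univ.filter fun j : Fin (d + (d + D) + (d + (d + D))) =>
      (j : ℕ) < d + (d + D) ∧ K a j ≠ K b j).card = d + D := by
  rw [gc_split (d + (d + D))]
  have h1 : (∑ i : Fin (d + (d+D)), if ((Fin.natAdd (d + (d+D)) i : Fin _) : ℕ) < d + (d+D) ∧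
      K a (Fin.natAdd _ i) ≠ K b (Fin.natAdd _ i) then 1 else 0) = 0 := by
    apply Finset.sum_eq_zero
    intro i _
    rw [if_neg]
    rintro ⟨h1, -⟩
    simp only [Fin.coe_natAdd] at h1
    omega
  have h2 : (∑ i : Fin (d + (d+D)), if ((Fin.castAdd (d + (d+D)) i : Fin _) : ℕ) < d + (d+D) ∧
      K a (Fin.castAdd _ i) ≠ K b (Fin.castAdd _ i) then 1 else 0)
      = (∑ j : Fin (d + (d + D)),
        if Fin.append (C a) (L a) j ≠ Fin.append (C b) (L b) j then 1 else 0) := by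
    apply Finset.sum_congr rfl
    intro i _
    rw [hK a, hK b]
    simp only [Fin.append_left, Fin.coe_castAdd]
    rw [if_congr (and_iff_right i.isLt) rfl rfl]
  rw [h1, h2, gc_sumM d D C L hL a b hab]
  omega

include hL hK in
private lemma gc_cntall (a b : ℕ) (hab : a % 2 ≠ b % 2) :
    (Finset.univ.filter fun j => K a j ≠ K b j).card = 2 * (d + D) := by
  rw [gc_split (d + (d + D))]
  have h1 : (∑ i : Fin (d + (d+D)),
      if K a (Fin.castAdd (d + (d+D)) i) ≠ K b (Fin.castAdd _ i) then 1 else 0)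
      = (∑ j : Fin (d + (d + D)),
        if Fin.append (C a) (L a) j ≠ Fin.append (C b) (L b) j then 1 else 0) := by
    apply Finset.sum_congr rfl
    intro i _
    rw [hK a, hK b]
    simp only [Fin.append_left]
  have h2 : (∑ i : Fin (d + (d+D)),
      if K a (Fin.natAdd (d + (d+D)) i) ≠ K b (Fin.natAdd _ i) then 1 else 0)
      = (∑ j : Fin (d + (d + D)),
        if Fin.append (C a) (L a) j ≠ Fin.append (C b) (L b) j then 1 else 0) := by
    apply Finset.sum_congr rfl
    intro i _
    rw [hK a, hK b]
    simp only [Fin.append_right]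
  rw [h1, h2, gc_sumM d D C L hL a b hab]
  omega
end

/-- The error-correcting Gray code `Genc` built from an injective code `Cenc` of
minimum distance `D` via the four-fold concatenation construction is injective. -/
theorem gray_code_injective (m d D : ℕ)
    (Cenc : ℕ → Fin d → Bool)
    (hinj : ∀ u < m, ∀ v < m, Cenc u = Cenc v → u = v)
    (hdist : ∀ u < m, ∀ v < m, u ≠ v → D ≤ hammingDist (Cenc u) (Cenc v))
    (Lenc : ℕ → Fin (d + D) → Bool)
    (hL : ∀ v, Lenc v = if Even v then Fin.append (Cenc v) (fun _ => false)
        else Fin.append (fun i => !(Cenc v i)) (fun _ => true))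
    (Kenc : ℕ → Fin (d + (d + D) + (d + (d + D))) → Bool)
    (hK : ∀ v, Kenc v =
      Fin.append (Fin.append (Cenc v) (Lenc v)) (Fin.append (Cenc v) (Lenc v)))
    (b : ℕ → Fin (2 * (d + D)) → Fin (d + (d + D) + (d + (d + D))))
    (hmono : ∀ q, q + 1 < m → StrictMono (b q))
    (hdiffb : ∀ q, q + 1 < m → ∀ i, Kenc q (b q i) ≠ Kenc (q + 1) (b q i))
    (Genc : ℕ → Fin (d + (d + D) + (d + (d + D))) → Bool)
    (hG : ∀ q r, r < 2 * (d + D) → q * (2 * (d + D)) + r ≤ (m - 1) * (2 * (d + D)) →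
      ∀ j, Genc (q * (2 * (d + D)) + r) j =
        if ∃ i : Fin (2 * (d + D)), (i : ℕ) < r ∧ b q i = j then Kenc (q + 1) j else Kenc q j)
    (v v' : ℕ) (hv : v ≤ (m - 1) * (2 * (d + D))) (hv' : v' ≤ (m - 1) * (2 * (d + D)))
    (heq : Genc v = Genc v') :
    v = v' := by
  clear hdist
  -- degenerate cases
  rcases Nat.eq_zero_or_pos (d + D) with h0 | h0
  · have hz : 2 * (d + D) = 0 := by omega
    rw [hz, Nat.mul_zero] at hv hv'
    omega
  rcases le_or_gt m 1 with hm | hm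
  · have hz : m - 1 = 0 := by omega
    rw [hz, Nat.zero_mul] at hv hv'
    omega
  -- arithmetic helpers
  have hg : 0 < 2 * (d + D) := by omega
  have hq1 : ∀ q r : ℕ, 0 < r → q * (2*(d+D)) + r ≤ (m-1) * (2*(d+D)) → q + 1 < m := by
    intro q r hr0 hb0
    by_contra hc
    push_neg at hc
    have := Nat.mul_le_mul_right (2*(d+D)) (show m - 1 ≤ q by omega)
    omega
  have hqm : ∀ q r : ℕ, r < 2*(d+D) → q * (2*(d+D)) + r ≤ (m-1) * (2*(d+D)) → q < m := by
    intro q r hr hb0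
    by_contra hc
    push_neg at hc
    have := Nat.mul_le_mul_right (2*(d+D)) (show m - 1 + 1 ≤ q by omega)
    rw [Nat.add_mul, Nat.one_mul] at this
    omega
  -- cardinality helpers on Fin (2*(d+D))
  have hcardle : ∀ k : ℕ, k < 2*(d+D) →
      (Finset.univ.filter fun i' : Fin (2*(d+D)) => (i':ℕ) ≤ k).card = k + 1 := by
    intro k hk
    rw [show (Finset.univ.filter fun i' : Fin (2*(d+D)) => (i':ℕ) ≤ k)
        = (Finset.univ.filter fun i' : Fin (2*(d+D)) => 0 ≤ (i':ℕ) ∧ (i':ℕ) < k+1) from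
      Finset.filter_congr (fun i _ => by omega)]
    rw [gc_card_val (2*(d+D)) 0 (k+1) (by omega)]
    omega
  have hcardlt : ∀ k : ℕ, k ≤ 2*(d+D) →
      (Finset.univ.filter fun i' : Fin (2*(d+D)) => (i':ℕ) < k).card = k := by
    intro k hk
    rw [show (Finset.univ.filter fun i' : Fin (2*(d+D)) => (i':ℕ) < k)
        = (Finset.univ.filter fun i' : Fin (2*(d+D)) => 0 ≤ (i':ℕ) ∧ (i':ℕ) < k) from
      Finset.filter_congr (fun i _ => by omega)]
    rw [gc_card_val (2*(d+D)) 0 k hk]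
    omega
  have hcardge : ∀ k : ℕ, k ≤ 2*(d+D) →
      (Finset.univ.filter fun i' : Fin (2*(d+D)) => k ≤ (i':ℕ)).card = 2*(d+D) - k := by
    intro k hk
    rw [show (Finset.univ.filter fun i' : Fin (2*(d+D)) => k ≤ (i':ℕ))
        = (Finset.univ.filter fun i' : Fin (2*(d+D)) => k ≤ (i':ℕ) ∧ (i':ℕ) < 2*(d+D)) from
      Finset.filter_congr (fun i _ => by have := i.isLt; omega)]
    rw [gc_card_val (2*(d+D)) k (2*(d+D)) le_rfl]
  -- the image of b q is the set of positions where Kenc q and Kenc (q+1) differ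
  have himgq : ∀ q, q + 1 < m → Finset.univ.image (b q)
      = Finset.univ.filter (fun j => Kenc q j ≠ Kenc (q+1) j) := by
    intro q hq
    apply Finset.eq_of_subset_of_card_le
    · intro j hj
      simp only [Finset.mem_image] at hj
      obtain ⟨i, -, rfl⟩ := hj
      simp only [Finset.mem_filter, Finset.mem_univ, true_and]
      exact hdiffb q hq i
    · rw [gc_cntall d D Cenc Lenc hL Kenc hK q (q+1) (by omega),
        Finset.card_image_of_injective _ (hmono q hq).injective]
      simp
  have hexq : ∀ q, q + 1 < m → ∀ j, Kenc q j ≠ Kenc (q+1) j → ∃ i, b q i = j := by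
    intro q hq j hj
    have : j ∈ Finset.univ.image (b q) := by
      rw [himgq q hq]
      simp only [Finset.mem_filter, Finset.mem_univ, true_and]
      exact hj
    simpa only [Finset.mem_image, Finset.mem_univ, true_and] using this
  -- threshold: b q i lies in the first half iff i < d + D
  have hthr : ∀ q, q + 1 < m → ∀ i : Fin (2*(d+D)),
      ((b q i : ℕ) < d + (d+D) ↔ (i:ℕ) < d + D) := by
    intro q hq i
    have hTcard : (Finset.univ.filter fun i' : Fin (2*(d+D)) =>
        (b q i' : ℕ) < d + (d+D)).card = d + D := by
      have himg2 : (Finset.univ.filter fun i' : Fin (2*(d+D)) =>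
          (b q i' : ℕ) < d + (d+D)).image (b q)
          = Finset.univ.filter (fun j : Fin (d+(d+D)+(d+(d+D))) =>
            (j:ℕ) < d + (d+D) ∧ Kenc q j ≠ Kenc (q+1) j) := by
        ext j
        simp only [Finset.mem_image, Finset.mem_filter, Finset.mem_univ, true_and]
        constructor
        · rintro ⟨i', hi', rfl⟩
          exact ⟨hi', hdiffb q hq i'⟩
        · rintro ⟨hj1, hj2⟩
          obtain ⟨i', rfl⟩ := hexq q hq j hj2
          exact ⟨i', hj1, rfl⟩
      rw [← Finset.card_image_of_injective _ (hmono q hq).injective, himg2,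
        gc_cnt1 d D Cenc Lenc hL Kenc hK q (q+1) (by omega)]
    constructor
    · intro hbi
      by_contra hic
      push_neg at hic
      have hsub : (Finset.univ.filter fun i' : Fin (2*(d+D)) => (i':ℕ) ≤ (i:ℕ))
          ⊆ (Finset.univ.filter fun i' : Fin (2*(d+D)) => (b q i' : ℕ) < d + (d+D)) := by
        intro i' hi'
        simp only [Finset.mem_filter, Finset.mem_univ, true_and] at hi' ⊢
        have hle : b q i' ≤ b q i := (hmono q hq).monotone (Fin.le_def.mpr hi')
        exact lt_of_le_of_lt (Fin.le_def.mp hle) hbi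
      have hc1 := hcardle (i:ℕ) i.isLt
      have := Finset.card_le_card hsub
      omega
    · intro hi
      by_contra hbc
      push_neg at hbc
      have hsub : (Finset.univ.filter fun i' : Fin (2*(d+D)) => (b q i' : ℕ) < d + (d+D))
          ⊆ (Finset.univ.filter fun i' : Fin (2*(d+D)) => (i':ℕ) < (i:ℕ)) := by
        intro i' hi'
        simp only [Finset.mem_filter, Finset.mem_univ, true_and] at hi' ⊢
        by_contra hcc
        push_neg at hcc
        have hle : b q i ≤ b q i' := (hmono q hq).monotone (Fin.le_def.mpr hcc)
        have := Fin.le_def.mp hle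
        omega
      have hc2 := hcardlt (i:ℕ) (by omega)
      have := Finset.card_le_card hsub
      omega
  -- L1: below-threshold values agree with Kenc q on the second half
  have hL1 : ∀ q r : ℕ, r < 2*(d+D) → q*(2*(d+D)) + r ≤ (m-1)*(2*(d+D)) → r ≤ d + D →
      ∀ j : Fin (d+(d+D)+(d+(d+D))), d+(d+D) ≤ (j:ℕ) →
        Genc (q*(2*(d+D))+r) j = Kenc q j := by
    intro q r hr hb0 hrh j hj
    rw [hG q r hr hb0 j, if_neg]
    rintro ⟨i, hir, rfl⟩
    have hq := hq1 q r (by omega) hb0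
    have h3 := hthr q hq i
    omega
  -- L2: above-threshold values agree with Kenc (q+1) on the first half
  have hL2 : ∀ q r : ℕ, r < 2*(d+D) → q*(2*(d+D)) + r ≤ (m-1)*(2*(d+D)) → d + D ≤ r →
      ∀ j : Fin (d+(d+D)+(d+(d+D))), (j:ℕ) < d+(d+D) →
        Genc (q*(2*(d+D))+r) j = Kenc (q+1) j := by
    intro q r hr hb0 hrh j hj
    have hq := hq1 q r (by omega) hb0
    rw [hG q r hr hb0 j]
    by_cases hd : Kenc q j = Kenc (q+1) j
    · split_ifs with h
      · rfl
      · exact hd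
    · obtain ⟨i, rfl⟩ := hexq q hq j hd
      have h3 := hthr q hq i
      rw [if_pos ⟨i, by omega, rfl⟩]
  -- L3a
  have hL3a : ∀ q r : ℕ, r < 2*(d+D) → q*(2*(d+D)) + r ≤ (m-1)*(2*(d+D)) → d + D ≤ r →
      (Finset.univ.filter fun j : Fin (d+(d+D)+(d+(d+D))) =>
        d+(d+D) ≤ (j:ℕ) ∧ Genc (q*(2*(d+D))+r) j ≠ Kenc q j).card = r - (d+D) := by
    intro q r hr hb0 hrh
    have hq := hq1 q r (by omega) hb0
    have key : (Finset.univ.filter fun i : Fin (2*(d+D)) => d+D ≤ (i:ℕ) ∧ (i:ℕ) < r).card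
        = (Finset.univ.filter fun j : Fin (d+(d+D)+(d+(d+D))) =>
          d+(d+D) ≤ (j:ℕ) ∧ Genc (q*(2*(d+D))+r) j ≠ Kenc q j).card := by
      apply Finset.card_bij (fun i _ => b q i)
      · intro i hi
        simp only [Finset.mem_filter, Finset.mem_univ, true_and] at hi ⊢
        have h3 := hthr q hq i
        refine ⟨by omega, ?_⟩
        rw [hG q r hr hb0, if_pos ⟨i, hi.2, rfl⟩]
        exact (hdiffb q hq i).symm
      · intro i1 h1 i2 h2 he
        exact (hmono q hq).injective he
      · intro j hj
        simp only [Finset.mem_filter, Finset.mem_univ, true_and] at hj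
        obtain ⟨hj1, hj2⟩ := hj
        rw [hG q r hr hb0 j] at hj2
        by_cases hc : ∃ i : Fin (2*(d+D)), (i:ℕ) < r ∧ b q i = j
        · obtain ⟨i, hir, rfl⟩ := hc
          refine ⟨i, ?_, rfl⟩
          simp only [Finset.mem_filter, Finset.mem_univ, true_and]
          have h3 := hthr q hq i
          exact ⟨by omega, hir⟩
        · rw [if_neg hc] at hj2
          exact absurd rfl hj2
    rw [← key, gc_card_val (2*(d+D)) (d+D) r (le_of_lt hr)]
  -- L3b
  have hL3b : ∀ q r : ℕ, r < 2*(d+D) → q*(2*(d+D)) + r ≤ (m-1)*(2*(d+D)) → d + D ≤ r →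
      (Finset.univ.filter fun j : Fin (d+(d+D)+(d+(d+D))) =>
        d+(d+D) ≤ (j:ℕ) ∧ Genc (q*(2*(d+D))+r) j ≠ Kenc (q+1) j).card = 2*(d+D) - r := by
    intro q r hr hb0 hrh
    have hq := hq1 q r (by omega) hb0
    have key : (Finset.univ.filter fun i : Fin (2*(d+D)) => r ≤ (i:ℕ)).card
        = (Finset.univ.filter fun j : Fin (d+(d+D)+(d+(d+D))) =>
          d+(d+D) ≤ (j:ℕ) ∧ Genc (q*(2*(d+D))+r) j ≠ Kenc (q+1) j).card := by
      apply Finset.card_bij (fun i _ => b q i)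
      · intro i hi
        simp only [Finset.mem_filter, Finset.mem_univ, true_and] at hi ⊢
        have h3 := hthr q hq i
        refine ⟨by omega, ?_⟩
        rw [hG q r hr hb0, if_neg]
        · exact hdiffb q hq i
        · rintro ⟨i', hi', he⟩
          have : i' = i := (hmono q hq).injective he
          subst this
          omega
      · intro i1 h1 i2 h2 he
        exact (hmono q hq).injective he
      · intro j hj
        simp only [Finset.mem_filter, Finset.mem_univ, true_and] at hj
        obtain ⟨hj1, hj2⟩ := hj
        rw [hG q r hr hb0 j] at hj2
        by_cases hc : ∃ i : Fin (2*(d+D)), (i:ℕ) < r ∧ b q i = j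
        · obtain ⟨i, hir, rfl⟩ := hc
          rw [if_pos ⟨i, hir, rfl⟩] at hj2
          exact absurd rfl hj2
        · rw [if_neg hc] at hj2
          obtain ⟨i, rfl⟩ := hexq q hq j hj2
          refine ⟨i, ?_, rfl⟩
          simp only [Finset.mem_filter, Finset.mem_univ, true_and]
          by_contra hcc
          exact hc ⟨i, by omega, rfl⟩
    rw [← key, hcardge r (le_of_lt hr)]
  -- extraction: Cenc from Kenc on either half
  have hCsnd : ∀ a a' : ℕ, (∀ j : Fin (d+(d+D)+(d+(d+D))), d+(d+D) ≤ (j:ℕ) →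
      Kenc a j = Kenc a' j) → Cenc a = Cenc a' := by
    intro a a' hja
    funext i
    have hj := hja (Fin.natAdd (d+(d+D)) (Fin.castAdd (d+D) i))
      (by simp [Fin.coe_natAdd])
    rw [hK a, hK a'] at hj
    simpa only [Fin.append_right, Fin.append_left] using hj
  have hCfst : ∀ a a' : ℕ, (∀ j : Fin (d+(d+D)+(d+(d+D))), (j:ℕ) < d+(d+D) →
      Kenc a j = Kenc a' j) → Cenc a = Cenc a' := by
    intro a a' hja
    funext i
    have hj := hja (Fin.castAdd (d+(d+D)) (Fin.castAdd (d+D) i))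
      (by simp only [Fin.coe_castAdd]; omega)
    rw [hK a, hK a'] at hj
    simpa only [Fin.append_left] using hj
  -- main case lemmas
  -- KEYA : both below threshold
  have KEYA : ∀ q r q' r' : ℕ, r < 2*(d+D) → r' < 2*(d+D) →
      q*(2*(d+D)) + r ≤ (m-1)*(2*(d+D)) → q'*(2*(d+D)) + r' ≤ (m-1)*(2*(d+D)) →
      r ≤ d + D → r' ≤ d + D →
      Genc (q*(2*(d+D))+r) = Genc (q'*(2*(d+D))+r') → q = q' := by
    intro q r q' r' hr hr' hb1 hb2 h1 h2 hE
    refine hinj q (hqm q r hr hb1) q' (hqm q' r' hr' hb2) (hCsnd q q' ?_)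
    intro j hj
    have e1 := hL1 q r hr hb1 h1 j hj
    have e2 := hL1 q' r' hr' hb2 h2 j hj
    rw [hE] at e1
    exact e1.symm.trans e2
  -- KEYB : both above threshold
  have KEYB : ∀ q r q' r' : ℕ, r < 2*(d+D) → r' < 2*(d+D) →
      q*(2*(d+D)) + r ≤ (m-1)*(2*(d+D)) → q'*(2*(d+D)) + r' ≤ (m-1)*(2*(d+D)) →
      d + D ≤ r → d + D ≤ r' →
      Genc (q*(2*(d+D))+r) = Genc (q'*(2*(d+D))+r') → q = q' := by
    intro q r q' r' hr hr' hb1 hb2 h1 h2 hE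
    have hq := hq1 q r (by omega) hb1
    have hq' := hq1 q' r' (by omega) hb2
    have : q + 1 = q' + 1 := by
      refine hinj (q+1) hq (q'+1) hq' (hCfst (q+1) (q'+1) ?_)
      intro j hj
      have e1 := hL2 q r hr hb1 h1 j hj
      have e2 := hL2 q' r' hr' hb2 h2 j hj
      rw [hE] at e1
      exact e1.symm.trans e2
    omega
  -- KEYC : mixed (first below, second strictly above) --> contradiction
  have KEYC : ∀ q r q' r' : ℕ, r < 2*(d+D) → r' < 2*(d+D) →
      q*(2*(d+D)) + r ≤ (m-1)*(2*(d+D)) → q'*(2*(d+D)) + r' ≤ (m-1)*(2*(d+D)) →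
      r ≤ d + D → d + D < r' →
      Genc (q*(2*(d+D))+r) = Genc (q'*(2*(d+D))+r') → False := by
    intro q r q' r' hr hr' hb1 hb2 h1 h2 hE
    have hcongr : ∀ z : Fin (d+(d+D)+(d+(d+D))) → Bool,
        (Finset.univ.filter fun j : Fin (d+(d+D)+(d+(d+D))) =>
          d+(d+D) ≤ (j:ℕ) ∧ Genc (q'*(2*(d+D))+r') j ≠ z j)
        = (Finset.univ.filter fun j : Fin (d+(d+D)+(d+(d+D))) =>
          d+(d+D) ≤ (j:ℕ) ∧ Kenc q j ≠ z j) := by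
      intro z
      apply Finset.filter_congr
      intro j _
      by_cases hj : d+(d+D) ≤ (j:ℕ)
      · have hx : Genc (q'*(2*(d+D))+r') j = Kenc q j := by
          rw [← hE]
          exact hL1 q r hr hb1 h1 j hj
        rw [hx]
      · simp [hj]
    have c1 : (Finset.univ.filter fun j : Fin (d+(d+D)+(d+(d+D))) =>
        d+(d+D) ≤ (j:ℕ) ∧ Kenc q j ≠ Kenc q' j).card = r' - (d+D) := by
      rw [← hcongr (Kenc q')]
      exact hL3a q' r' hr' hb2 (by omega)
    have c2 : (Finset.univ.filter fun j : Fin (d+(d+D)+(d+(d+D))) =>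
        d+(d+D) ≤ (j:ℕ) ∧ Kenc q j ≠ Kenc (q'+1) j).card = 2*(d+D) - r' := by
      rw [← hcongr (Kenc (q'+1))]
      exact hL3b q' r' hr' hb2 (by omega)
    by_cases hp : q % 2 = q' % 2
    · have hval := gc_cnt2 d D Cenc Lenc hL Kenc hK q (q'+1) (by omega)
      rw [hval] at c2
      omega
    · have hval := gc_cnt2 d D Cenc Lenc hL Kenc hK q q' hp
      rw [hval] at c1
      omega
  -- equal-quotient case
  have KEYE : ∀ q r r' : ℕ, r < r' → r' < 2*(d+D) →
      q*(2*(d+D)) + r ≤ (m-1)*(2*(d+D)) → q*(2*(d+D)) + r' ≤ (m-1)*(2*(d+D)) →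
      Genc (q*(2*(d+D))+r) = Genc (q*(2*(d+D))+r') → False := by
    intro q r r' hrr hr' hb1 hb2 hE
    have hq := hq1 q r' (by omega) hb2
    have e1 : Genc (q*(2*(d+D))+r) (b q ⟨r, by omega⟩) = Kenc q (b q ⟨r, by omega⟩) := by
      rw [hG q r (by omega) hb1, if_neg]
      rintro ⟨i, hir, he⟩
      have hii : i = ⟨r, by omega⟩ := (hmono q hq).injective he
      have hvv : (i:ℕ) = r := by rw [hii]
      omega
    have e2 : Genc (q*(2*(d+D))+r') (b q ⟨r, by omega⟩) = Kenc (q+1) (b q ⟨r, by omega⟩) := by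
      rw [hG q r' hr' hb2, if_pos]
      exact ⟨⟨r, by omega⟩, by simpa using hrr, rfl⟩
    rw [hE] at e1
    exact hdiffb q hq ⟨r, by omega⟩ (e1.symm.trans e2)
  -- decompose v and v'
  obtain ⟨q, r, hr, rfl⟩ : ∃ q r, r < 2*(d+D) ∧ v = q * (2*(d+D)) + r :=
    ⟨v / (2*(d+D)), v % (2*(d+D)), Nat.mod_lt _ hg, (Nat.div_add_mod' v (2*(d+D))).symm⟩
  obtain ⟨q', r', hr', rfl⟩ : ∃ q' r', r' < 2*(d+D) ∧ v' = q' * (2*(d+D)) + r' :=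
    ⟨v' / (2*(d+D)), v' % (2*(d+D)), Nat.mod_lt _ hg, (Nat.div_add_mod' v' (2*(d+D))).symm⟩
  have hqq : q = q' := by
    rcases le_or_gt r (d+D) with h1 | h1 <;> rcases le_or_gt r' (d+D) with h2 | h2
    · exact KEYA q r q' r' hr hr' hv hv' h1 h2 heq
    · exact (KEYC q r q' r' hr hr' hv hv' h1 h2 heq).elim
    · exact (KEYC q' r' q r hr' hr hv' hv h2 h1 heq.symm).elim
    · exact KEYB q r q' r' hr hr' hv hv' (by omega) (by omega) heq
  subst hqq
  rcases lt_trichotomy r r' with h | h | h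
  · exact (KEYE q r r' h hr' hv hv' heq).elim
  · rw [h]
  · exact (KEYE q r' r h hr hv' hv heq.symm).elim
end
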